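/- arXiv:2602.14732 — 2 statements merged into one kernel-verified Lean document; each statement's English description precedes it below -/
import Mathlib

section
/- Let (P_i)_{i∈[n]} be PSD matrices on 𝒴, let 𝒳 = ℂ^n, and let 𝐏 := ∑_{i=1}^n |i⟩⟨i| ⊗ P_i be the block-diagonal matrix on 𝒳⊗𝒴 with blocks P_i. Let Q be a PSD matrix on 𝒴 and let 𝐐 be any PSD matrix on 𝒳⊗𝒴 with Tr_𝒳[𝐐] = Q, with block decomposition 𝐐 = ∑_{i,j} |i⟩⟨j| ⊗ Q_{ij}. Then the block-diagonal pinching 𝐐' := ∑_{i=1}^n |i⟩⟨i| ⊗ Q_{ii} satisfies Tr_𝒳[𝐐'] = Q and F(𝐏, 𝐐) ≤ F(𝐏, 𝐐'). Consequently, the supremum of F(𝐏, ·) over {𝐐 PSD : Tr_𝒳[𝐐] = Q} is attained at a block-diagonal matrix. -/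
open Matrix Kronecker
open scoped ComplexOrder

noncomputable section

open Classical in
/-- The positive semidefinite square root of a PSD matrix (junk value `0` otherwise). -/
noncomputable def msqrt {n : Type*} [Fintype n] [DecidableEq n] (A : Matrix n n ℂ) :
    Matrix n n ℂ :=
  if h : A.PosSemidef then
    (h.1.eigenvectorUnitary : Matrix n n ℂ) * diagonal ((↑) ∘ (√·) ∘ h.1.eigenvalues) *
      (star h.1.eigenvectorUnitary : Matrix n n ℂ)
  else 0

/-- The (square-root) fidelity `F(P,Q) = Tr[√(√Q P √Q)]`. -/
noncomputable def fidelity {n : Type*} [Fintype n] [DecidableEq n]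
    (P Q : Matrix n n ℂ) : ℝ :=
  ((msqrt (msqrt Q * P * msqrt Q)).trace).re

/-- The matrix geometric mean `A # B = A^{1/2} √(A^{-1/2} B A^{-1/2}) A^{1/2}`. -/
noncomputable def geomMean {n : Type*} [Fintype n] [DecidableEq n]
    (A B : Matrix n n ℂ) : Matrix n n ℂ :=
  msqrt A * msqrt ((msqrt A)⁻¹ * B * (msqrt A)⁻¹) * msqrt A

/-- Partial trace over the first factor `𝒳`. -/
noncomputable def ptraceX {X Y : Type*} [Fintype X]
    (M : Matrix (X × Y) (X × Y) ℂ) : Matrix Y Y ℂ :=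
  Matrix.of fun y y' => ∑ x : X, M (x, y) (x, y')

set_option linter.unusedSectionVars false

namespace BDP

variable {m : Type*} [Fintype m] [DecidableEq m]

lemma msqrt_eq {A : Matrix m m ℂ} (hA : A.PosSemidef) : msqrt A =
    (hA.1.eigenvectorUnitary : Matrix m m ℂ) * diagonal ((↑) ∘ (√·) ∘ hA.1.eigenvalues) *
      (star hA.1.eigenvectorUnitary : Matrix m m ℂ) := dif_pos hA

open scoped MatrixOrder in
lemma msqrt_eq_sqrt {A : Matrix m m ℂ} (hA : A.PosSemidef) : msqrt A = CFC.sqrt A := by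
  rw [CFC.sqrt_eq_real_sqrt A hA.nonneg,
    cfcₙ_eq_cfc (hf := Real.continuous_sqrt.continuousOn) (hf0 := Real.sqrt_zero), hA.1.cfc_eq,
    msqrt_eq hA]
  rfl

open scoped MatrixOrder in
lemma msqrt_posSemidef {A : Matrix m m ℂ} (hA : A.PosSemidef) : (msqrt A).PosSemidef := by
  rw [msqrt_eq_sqrt hA]; exact (CFC.sqrt_nonneg A).posSemidef

open scoped MatrixOrder in
lemma msqrt_mul_self {A : Matrix m m ℂ} (hA : A.PosSemidef) : msqrt A * msqrt A = A := by
  rw [msqrt_eq_sqrt hA]; exact CFC.sqrt_mul_sqrt_self A hA.nonneg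

lemma msqrt_herm {A : Matrix m m ℂ} (hA : A.PosSemidef) : (msqrt A)ᴴ = msqrt A :=
  (msqrt_posSemidef hA).1

open scoped MatrixOrder in
lemma msqrt_unique {A B : Matrix m m ℂ} (hB : B.PosSemidef) (h : B * B = A) :
    msqrt A = B := by
  have hA : A.PosSemidef := by
    have := Matrix.posSemidef_conjTranspose_mul_self B
    rwa [hB.1, h] at this
  rw [msqrt_eq_sqrt hA]
  exact CFC.sqrt_unique h hB.nonneg

/-- Euclidean norm of a complex vector. -/
def cnorm (v : m → ℂ) : ℝ := Real.sqrt (∑ i, Complex.normSq (v i))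

lemma cnorm_nonneg (v : m → ℂ) : 0 ≤ cnorm v := Real.sqrt_nonneg _

lemma dot_self_eq (v : m → ℂ) :
    star v ⬝ᵥ v = ((∑ i, Complex.normSq (v i) : ℝ) : ℂ) := by
  simp only [dotProduct, Pi.star_apply]
  push_cast
  exact Finset.sum_congr rfl fun i _ => by
    rw [Complex.star_def, mul_comm, Complex.mul_conj]

lemma cnorm_sq (v : m → ℂ) : cnorm v ^ 2 = (star v ⬝ᵥ v).re := by
  rw [dot_self_eq, Complex.ofReal_re, cnorm, Real.sq_sqrt]
  exact Finset.sum_nonneg fun i _ => Complex.normSq_nonneg _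

lemma cnorm_zero : cnorm (0 : m → ℂ) = 0 := by simp [cnorm]

lemma abs_dot_le (a b : m → ℂ) : ‖star a ⬝ᵥ b‖ ≤ cnorm a * cnorm b := by
  have h1 : ‖star a ⬝ᵥ b‖ ≤ ∑ i, ‖a i‖ * ‖b i‖ := by
    refine le_trans (norm_sum_le _ _) ?_
    refine Finset.sum_le_sum fun i _ => ?_
    rw [Pi.star_apply, norm_mul]
    simp
  refine le_trans h1 ?_
  have h2 := Real.sum_mul_le_sqrt_mul_sqrt Finset.univ
      (fun i => ‖a i‖) (fun i => ‖b i‖)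
  refine h2.trans_eq ?_
  unfold cnorm
  simp_rw [Complex.sq_norm]

lemma dot_shift (B : Matrix m m ℂ) (u w : m → ℂ) :
    star u ⬝ᵥ (B *ᵥ w) = star (Bᴴ *ᵥ u) ⬝ᵥ w := by
  rw [star_mulVec, conjTranspose_conjTranspose, dotProduct_mulVec]

lemma star_dot (a b : m → ℂ) : star a ⬝ᵥ b = star (star b ⬝ᵥ a) := by
  simp only [dotProduct, star_sum, Pi.star_apply, StarMul.star_mul, star_star]

lemma psd_dot_real {A : Matrix m m ℂ} (hA : A.PosSemidef) (u : m → ℂ) :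
    star u ⬝ᵥ A *ᵥ u = (((star u ⬝ᵥ A *ᵥ u).re : ℝ) : ℂ) ∧ 0 ≤ (star u ⬝ᵥ A *ᵥ u).re := by
  have h := hA.dotProduct_mulVec_nonneg u
  rw [Complex.le_def] at h
  obtain ⟨h1, h2⟩ := h
  refine ⟨Complex.ext rfl ?_, by simpa using h1⟩
  simp [← h2]

lemma dot_msqrt {A : Matrix m m ℂ} (hA : A.PosSemidef) (u : m → ℂ) :
    star u ⬝ᵥ A *ᵥ u = star (msqrt A *ᵥ u) ⬝ᵥ (msqrt A *ᵥ u) := by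
  conv_lhs => rw [← msqrt_mul_self hA, ← mulVec_mulVec, dot_shift, msqrt_herm hA]

lemma cnorm_sq_psd {A : Matrix m m ℂ} (hA : A.PosSemidef) (u : m → ℂ) :
    cnorm (msqrt A *ᵥ u) ^ 2 = (star u ⬝ᵥ A *ᵥ u).re := by
  rw [cnorm_sq, ← dot_msqrt hA]

lemma star_sum_elim (u v : m → ℂ) :
    star (Sum.elim u v) = Sum.elim (star u) (star v) := by
  funext s; cases s <;> rfl

lemma quadform_fromBlocks {P Q X : Matrix m m ℂ}
    (h : (fromBlocks P X Xᴴ Q).PosSemidef) (u v : m → ℂ) :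
    0 ≤ (star u ⬝ᵥ P *ᵥ u).re + 2 * (star u ⬝ᵥ X *ᵥ v).re + (star v ⬝ᵥ Q *ᵥ v).re := by
  have h2 := h.dotProduct_mulVec_nonneg (Sum.elim u v)
  rw [Complex.le_def] at h2
  obtain ⟨h1, _⟩ := h2
  rw [fromBlocks_mulVec, star_sum_elim, sumElim_dotProduct_sumElim,
    dotProduct_add, dotProduct_add] at h1
  simp only [Sum.elim_comp_inl, Sum.elim_comp_inr] at h1
  have hxh : (star v ⬝ᵥ Xᴴ *ᵥ u).re = (star u ⬝ᵥ X *ᵥ v).re := by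
    rw [dot_shift Xᴴ, conjTranspose_conjTranspose, star_dot]
    exact (Complex.conj_re _).symm ▸ rfl
  simp only [Complex.add_re, Complex.zero_re] at h1 ⊢
  rw [hxh] at h1
  linarith

lemma bilinear_bound {P Q X : Matrix m m ℂ} (hP : P.PosSemidef) (hQ : Q.PosSemidef)
    (h : (fromBlocks P X Xᴴ Q).PosSemidef) (u v : m → ℂ) :
    ‖star u ⬝ᵥ X *ᵥ v‖ ≤ cnorm (msqrt P *ᵥ u) * cnorm (msqrt Q *ᵥ v) := by
  set a := (star u ⬝ᵥ P *ᵥ u).re with ha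
  set b := (star v ⬝ᵥ Q *ᵥ v).re with hb
  set t := star u ⬝ᵥ X *ᵥ v with ht
  have hann : 0 ≤ a := (psd_dot_real hP u).2
  have hbnn : 0 ≤ b := (psd_dot_real hQ v).2
  set φ : ℂ := if t = 0 then 1 else t / (‖t‖ : ℂ) with hφ
  have hφt : (starRingEnd ℂ) φ * t = (‖t‖ : ℂ) := by
    by_cases h0 : t = 0
    · simp [hφ, h0]
    · rw [hφ, if_neg h0, map_div₀, Complex.conj_ofReal, div_mul_eq_mul_div,
        mul_comm, Complex.mul_conj]
      rw [Complex.normSq_eq_norm_sq]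
      push_cast
      have : (‖t‖ : ℂ) ≠ 0 := by
        simpa using h0
      field_simp
  have hφabs : ‖φ‖ = 1 := by
    by_cases h0 : t = 0
    · simp [hφ, h0]
    · rw [hφ, if_neg h0, norm_div, Complex.norm_real, norm_norm]
      exact div_self (norm_ne_zero_iff.mpr h0)
  have key : ∀ s : ℝ, 0 ≤ a * (s * s) + (2 * ‖t‖) * s + b := by
    intro s
    set c : ℂ := (s : ℂ) * φ with hc
    have hcc : (starRingEnd ℂ) c * c = ((s * s : ℝ) : ℂ) := by
      have h' : (starRingEnd ℂ) c * c = (Complex.normSq c : ℂ) := by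
        rw [mul_comm, Complex.mul_conj]
      rw [h', hc, Complex.normSq_mul]
      have h1 : Complex.normSq φ = 1 := by
        rw [← Complex.sq_norm, hφabs]; norm_num
      rw [h1, Complex.normSq_ofReal]
      push_cast; ring
    have hct : (starRingEnd ℂ) c * t = (s : ℂ) * (‖t‖ : ℂ) := by
      rw [hc, RingHom.map_mul, Complex.conj_ofReal, mul_assoc, hφt]
    have hq := quadform_fromBlocks h (c • u) v
    have e1 : star (c • u) ⬝ᵥ P *ᵥ (c • u) = ((s * s : ℝ) : ℂ) * (star u ⬝ᵥ P *ᵥ u) := by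
      rw [star_smul, smul_dotProduct, mulVec_smul, dotProduct_smul, smul_eq_mul, smul_eq_mul,
        ← mul_assoc, Complex.star_def, hcc]
    have e2 : star (c • u) ⬝ᵥ X *ᵥ v = (s : ℂ) * (‖t‖ : ℂ) := by
      rw [star_smul, smul_dotProduct, smul_eq_mul, Complex.star_def, hct]
    rw [e1, e2] at hq
    rw [Complex.re_ofReal_mul, ← Complex.ofReal_mul, Complex.ofReal_re] at hq
    rw [← ha, ← hb] at hq
    nlinarith [hq]
  have hd := discrim_le_zero key
  rw [discrim] at hd
  have habs : ‖t‖ ^ 2 ≤ a * b := by nlinarith [norm_nonneg t]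
  have : ‖t‖ ≤ Real.sqrt (a * b) := by
    rw [← Real.sqrt_sq (norm_nonneg t)]
    exact Real.sqrt_le_sqrt habs
  refine this.trans ?_
  rw [Real.sqrt_mul hann]
  have e1 : Real.sqrt a = cnorm (msqrt P *ᵥ u) := by
    rw [ha, ← cnorm_sq_psd hP, Real.sqrt_sq (cnorm_nonneg _)]
  have e2 : Real.sqrt b = cnorm (msqrt Q *ᵥ v) := by
    rw [hb, ← cnorm_sq_psd hQ, Real.sqrt_sq (cnorm_nonneg _)]
  rw [e1, e2]

/-! ### Conjugated diagonal matrices -/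

/-- `U * diagonal f * Uᴴ` for a real vector `f`. -/
def cdiag (U : Matrix m m ℂ) (f : m → ℝ) : Matrix m m ℂ :=
  U * diagonal (fun i => (f i : ℂ)) * Uᴴ

section cdiag

variable {U : Matrix m m ℂ}

lemma cdiag_mul (hU' : Uᴴ * U = 1) (f g : m → ℝ) :
    cdiag U f * cdiag U g = cdiag U (fun i => f i * g i) := by
  unfold cdiag
  have : U * diagonal (fun i => (f i : ℂ)) * Uᴴ * (U * diagonal (fun i => (g i : ℂ)) * Uᴴ)
      = U * (diagonal (fun i => (f i : ℂ)) * (Uᴴ * U) * diagonal (fun i => (g i : ℂ))) * Uᴴ := by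
    noncomm_ring
  rw [this, hU', mul_one, diagonal_mul_diagonal]
  push_cast
  rfl

lemma cdiag_herm (f : m → ℝ) : (cdiag U f)ᴴ = cdiag U f := by
  unfold cdiag
  rw [conjTranspose_mul, conjTranspose_mul, conjTranspose_conjTranspose, diagonal_conjTranspose]
  have : (star fun i => (f i : ℂ)) = fun i => ((f i : ℝ) : ℂ) := by
    funext i; simp [Complex.conj_ofReal]
  rw [this, Matrix.mul_assoc]

lemma cdiag_psd (f : m → ℝ) (hf : ∀ i, 0 ≤ f i) : (cdiag U f).PosSemidef := by
  unfold cdiag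
  exact (posSemidef_diagonal_iff.mpr fun i =>
    Complex.zero_le_real.mpr (hf i)).mul_mul_conjTranspose_same U

lemma cdiag_trace (hU' : Uᴴ * U = 1) (f : m → ℝ) : (cdiag U f).trace = ((∑ i, f i : ℝ) : ℂ) := by
  unfold cdiag
  rw [trace_mul_cycle, hU', Matrix.one_mul, trace_diagonal]
  push_cast
  rfl

lemma cdiag_one (hU : U * Uᴴ = 1) : cdiag U (fun _ => 1) = 1 := by
  unfold cdiag
  simpa using hU

lemma cdiag_sub (f g : m → ℝ) : cdiag U f - cdiag U g = cdiag U (fun i => f i - g i) := by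
  unfold cdiag
  rw [← Matrix.sub_mul, ← Matrix.mul_sub, diagonal_sub]
  congr 2
  funext i
  simp

end cdiag

lemma psd_spectral {A : Matrix m m ℂ} (hA : A.PosSemidef) :
    ∃ (U : Matrix m m ℂ) (f : m → ℝ), U * Uᴴ = 1 ∧ Uᴴ * U = 1 ∧ (∀ i, 0 ≤ f i) ∧
      A = cdiag U f ∧ msqrt A = cdiag U (fun i => Real.sqrt (f i)) := by
  refine ⟨hA.1.eigenvectorUnitary, hA.1.eigenvalues, ?_, ?_, hA.eigenvalues_nonneg, ?_, ?_⟩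
  · have := (hA.1.eigenvectorUnitary).2
    rw [Unitary.mem_iff] at this
    simpa [Matrix.star_eq_conjTranspose] using this.2
  · have := (hA.1.eigenvectorUnitary).2
    rw [Unitary.mem_iff] at this
    simpa [Matrix.star_eq_conjTranspose] using this.1
  · exact hA.1.spectral_theorem
  · rw [msqrt_eq hA]
    rfl

/-! ### Feasible points for the fidelity SDP -/

lemma psd_fromBlocks_right {R : Matrix m m ℂ} (hR : R.PosSemidef) :
    (fromBlocks (0 : Matrix m m ℂ) 0 0 R).PosSemidef := by
  have h : fromBlocks (0 : Matrix m m ℂ) 0 0 R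
      = fromRows (0 : Matrix m m ℂ) 1 * R * (fromRows (0 : Matrix m m ℂ) 1)ᴴ := by
    rw [conjTranspose_fromRows_eq_fromCols_conjTranspose, Matrix.mul_assoc,
      mul_fromCols, fromRows_mul_fromCols]
    simp
  rw [h]
  exact hR.mul_mul_conjTranspose_same _

/-- Scalar fact: `(√x)⁻¹ * x = √x` for `0 ≤ x`. -/
lemma sqrt_inv_mul_self {x : ℝ} (hx : 0 ≤ x) : (Real.sqrt x)⁻¹ * x = Real.sqrt x := by
  rcases eq_or_lt_of_le hx with h | h
  · simp [← h]
  · have hs : Real.sqrt x ≠ 0 := by positivity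
    have hxx := Real.mul_self_sqrt hx
    calc (Real.sqrt x)⁻¹ * x = (Real.sqrt x)⁻¹ * (Real.sqrt x * Real.sqrt x) := by rw [hxx]
      _ = Real.sqrt x := by rw [← mul_assoc, inv_mul_cancel₀ hs, one_mul]

lemma sqrt_mul_inv_ind {x : ℝ} (hx : 0 ≤ x) :
    0 ≤ 1 - (Real.sqrt x)⁻¹ * x * (Real.sqrt x)⁻¹ := by
  rcases eq_or_lt_of_le hx with h | h
  · simp [← h]
  · have hs : Real.sqrt x ≠ 0 := by positivity
    rw [sqrt_inv_mul_self hx, mul_inv_cancel₀ hs]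
    norm_num

/-- Statement (B): there is a feasible `X` whose trace attains the fidelity. -/
lemma exists_opt {P Q : Matrix m m ℂ} (hP : P.PosSemidef) (hQ : Q.PosSemidef) :
    ∃ X : Matrix m m ℂ, (fromBlocks P X Xᴴ Q).PosSemidef ∧
      X.trace = ((fidelity P Q : ℝ) : ℂ) := by
  set T := msqrt Q with hT
  have hTpsd : T.PosSemidef := msqrt_posSemidef hQ
  have hTh : Tᴴ = T := msqrt_herm hQ
  have hN : (T * P * T).PosSemidef := by
    have := hP.conjTranspose_mul_mul_same T
    rwa [hTh] at this
  set N := T * P * T with hNdef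
  obtain ⟨U, f, hU, hU', hf, hNspec, hSspec⟩ := psd_spectral hN
  set Si : Matrix m m ℂ := cdiag U (fun i => (Real.sqrt (f i))⁻¹) with hSi
  have hSih : Siᴴ = Si := cdiag_herm _
  have hSipsd : Si.PosSemidef := cdiag_psd _ fun i => by positivity
  set X := P * (T * Si * T) with hX
  have hfid : fidelity P Q = ∑ i, Real.sqrt (f i) := by
    unfold fidelity
    rw [← hT, ← hNdef, hSspec, cdiag_trace hU', Complex.ofReal_re]
  refine ⟨X, ?_, ?_⟩
  · -- positive semidefiniteness
    set C := msqrt P with hC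
    have hCh : Cᴴ = C := msqrt_herm hP
    set D := C * (T * Si * T) with hD
    have hCC' : C * C = P := by rw [hC]; exact msqrt_mul_self hP
    have hCC : Cᴴ * C = P := by rw [hCh]; exact hCC'
    have hCD : Cᴴ * D = X := by
      rw [hD, hCh, ← Matrix.mul_assoc, hCC', hX]
    have hDh : Dᴴ = (T * Si * T) * C := by
      rw [hD, conjTranspose_mul, conjTranspose_mul, conjTranspose_mul, hTh, hSih, hCh]
      noncomm_ring
    have hDC : Dᴴ * C = Xᴴ := by
      have h := congrArg Matrix.conjTranspose hCD
      rw [conjTranspose_mul, conjTranspose_conjTranspose] at h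
      exact h
    have hSiNSi : Si * N * Si = cdiag U (fun i => (Real.sqrt (f i))⁻¹ * f i * (Real.sqrt (f i))⁻¹) := by
      rw [hNspec, hSi, cdiag_mul hU', cdiag_mul hU']
    have hDD : Dᴴ * D = T * cdiag U (fun i => (Real.sqrt (f i))⁻¹ * f i * (Real.sqrt (f i))⁻¹) * T := by
      rw [hDh, hD, ← hSiNSi, hNdef]
      calc T * Si * T * C * (C * (T * Si * T))
          = T * Si * (T * (C * C) * T) * Si * T := by noncomm_ring
        _ = T * Si * (T * P * T) * Si * T := by rw [hCC']
        _ = T * (Si * (T * P * T) * Si) * T := by noncomm_ring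
    have hrem : (Q - Dᴴ * D).PosSemidef := by
      have hQTT : Q = T * cdiag U (fun _ => 1) * T := by
        rw [cdiag_one hU, Matrix.mul_one, hT, msqrt_mul_self hQ]
      rw [hDD, hQTT, ← Matrix.sub_mul, ← Matrix.mul_sub, cdiag_sub]
      have : (T * cdiag U (fun i => 1 - (Real.sqrt (f i))⁻¹ * f i * (Real.sqrt (f i))⁻¹) * T).PosSemidef := by
        have hpsd : (cdiag U (fun i => 1 - (Real.sqrt (f i))⁻¹ * f i * (Real.sqrt (f i))⁻¹)).PosSemidef :=
          cdiag_psd _ fun i => sqrt_mul_inv_ind (hf i)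
        have := hpsd.conjTranspose_mul_mul_same T
        rwa [hTh] at this
      exact this
    have hsum : Dᴴ * D + (Q - Dᴴ * D) = Q := by abel
    have hsplit : fromBlocks P X Xᴴ Q
        = (fromCols C D)ᴴ * fromCols C D + fromBlocks 0 0 0 (Q - Dᴴ * D) := by
      rw [conjTranspose_fromCols_eq_fromRows_conjTranspose, fromRows_mul_fromCols,
        hCC, hCD, hDC, fromBlocks_add, hsum]
      simp
    rw [hsplit]
    exact (posSemidef_conjTranspose_mul_self _).add (psd_fromBlocks_right hrem)
  · -- trace computation
    rw [hX, hfid]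
    have h1 : (P * (T * Si * T)).trace = (N * Si).trace := by
      rw [hNdef]
      rw [show P * (T * Si * T) = P * T * Si * T by noncomm_ring]
      rw [trace_mul_cycle]
      congr 1
      noncomm_ring
    rw [h1, hNspec, cdiag_mul hU', cdiag_trace hU']
    congr 1
    exact Finset.sum_congr rfl fun i _ => by rw [mul_comm]; exact sqrt_inv_mul_self (hf i)

/-! ### Statement (A): any feasible `X` has `Re Tr X ≤ F(P,Q)` -/

lemma ind_mul_ind (x : ℝ) : (x * x⁻¹) * (x * x⁻¹) = x * x⁻¹ := by
  by_cases h : x = 0 <;> field_simp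

lemma mul_ind (x : ℝ) : x * (x * x⁻¹) = x := by
  by_cases h : x = 0 <;> field_simp

lemma cnorm_contract {Pi : Matrix m m ℂ} (hh : Piᴴ = Pi) (hid : Pi * Pi = Pi) (a : m → ℂ) :
    cnorm (Pi *ᵥ a) ≤ cnorm a := by
  have h1 : star (Pi *ᵥ a) ⬝ᵥ (Pi *ᵥ a) = star (Pi *ᵥ a) ⬝ᵥ a := by
    rw [dot_shift, hh, mulVec_mulVec, hid]
  have h2 : cnorm (Pi *ᵥ a) ^ 2 = (star (Pi *ᵥ a) ⬝ᵥ a).re := by rw [cnorm_sq, h1]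
  have h3 : (star (Pi *ᵥ a) ⬝ᵥ a).re ≤ cnorm (Pi *ᵥ a) * cnorm a :=
    (Complex.re_le_norm _).trans (abs_dot_le _ _)
  by_cases hz : cnorm (Pi *ᵥ a) = 0
  · rw [hz]; exact cnorm_nonneg a
  · have hpos : 0 < cnorm (Pi *ᵥ a) := lt_of_le_of_ne (cnorm_nonneg _) (Ne.symm hz)
    nlinarith

lemma star_single_dot (i : m) (w : m → ℂ) : star (Pi.single i (1:ℂ)) ⬝ᵥ w = w i := by
  rw [dotProduct, Finset.sum_eq_single i]
  · simp
  · intro k _ hk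
    simp [Pi.single_eq_of_ne hk]
  · intro h; exact absurd (Finset.mem_univ i) h

lemma entry_eq_dot (A : Matrix m m ℂ) (i j : m) :
    A i j = star (Pi.single i (1:ℂ)) ⬝ᵥ (A *ᵥ Pi.single j 1) := by
  rw [star_single_dot]
  simp [mulVec_single]

lemma retr_le_fidelity {P Q X : Matrix m m ℂ} (hP : P.PosSemidef) (hQ : Q.PosSemidef)
    (hM : (fromBlocks P X Xᴴ Q).PosSemidef) : (X.trace).re ≤ fidelity P Q := by
  obtain ⟨V, lp, hV, hV', hlp, hPspec, hPs⟩ := psd_spectral hP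
  obtain ⟨Vq, lq, hVq, hVq', hlq, hQspec, hQs⟩ := psd_spectral hQ
  have hsPh : (msqrt P)ᴴ = msqrt P := msqrt_herm hP
  have hsQh : (msqrt Q)ᴴ = msqrt Q := msqrt_herm hQ
  set SpP := cdiag V (fun i => (Real.sqrt (lp i))⁻¹) with hSpP
  set SpQ := cdiag Vq (fun i => (Real.sqrt (lq i))⁻¹) with hSpQ
  have hSpPh : SpPᴴ = SpP := cdiag_herm _
  have hSpQh : SpQᴴ = SpQ := cdiag_herm _
  set PiP := cdiag V (fun i => Real.sqrt (lp i) * (Real.sqrt (lp i))⁻¹) with hPiP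
  set PiQ := cdiag Vq (fun i => Real.sqrt (lq i) * (Real.sqrt (lq i))⁻¹) with hPiQ
  have hPiPh : PiPᴴ = PiP := cdiag_herm _
  have hPiQh : PiQᴴ = PiQ := cdiag_herm _
  have hPiPid : PiP * PiP = PiP := by
    rw [hPiP, cdiag_mul hV']; exact congrArg (cdiag V) (funext fun i => ind_mul_ind _)
  have hPiQid : PiQ * PiQ = PiQ := by
    rw [hPiQ, cdiag_mul hVq']; exact congrArg (cdiag Vq) (funext fun i => ind_mul_ind _)
  have hsPSpP : msqrt P * SpP = PiP := by rw [hPs, hSpP, cdiag_mul hV', hPiP]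
  have hSpPsP : SpP * msqrt P = PiP := by
    rw [hPs, hSpP, cdiag_mul hV', hPiP]; exact congrArg (cdiag V) (funext fun i => mul_comm _ _)
  have hsQSpQ : msqrt Q * SpQ = PiQ := by rw [hQs, hSpQ, cdiag_mul hVq', hPiQ]
  have hSpQsQ : SpQ * msqrt Q = PiQ := by
    rw [hQs, hSpQ, cdiag_mul hVq', hPiQ]; exact congrArg (cdiag Vq) (funext fun i => mul_comm _ _)
  have hsPPiP : msqrt P * PiP = msqrt P := by
    rw [hPs, hPiP, cdiag_mul hV']; exact congrArg (cdiag V) (funext fun i => mul_ind _)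
  have hsQPiQ : msqrt Q * PiQ = msqrt Q := by
    rw [hQs, hPiQ, cdiag_mul hVq']; exact congrArg (cdiag Vq) (funext fun i => mul_ind _)
  -- X is supported on the ranges of P and Q
  have hPX : PiP * X = X := by
    have hzero : (1 - PiP) * X = 0 := by
      ext i j
      have he : ((1 - PiP) * X) i j
          = star ((1 - PiP) *ᵥ Pi.single i 1) ⬝ᵥ (X *ᵥ Pi.single j 1) := by
        rw [entry_eq_dot ((1 - PiP) * X) i j, ← mulVec_mulVec, dot_shift,
          conjTranspose_sub, conjTranspose_one, hPiPh]
      have hz : msqrt P *ᵥ ((1 - PiP) *ᵥ Pi.single i 1) = 0 := by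
        rw [mulVec_mulVec, Matrix.mul_sub, Matrix.mul_one, hsPPiP, sub_self, zero_mulVec]
      have hb := bilinear_bound hP hQ hM ((1 - PiP) *ᵥ Pi.single i 1) (Pi.single j 1)
      rw [hz, cnorm_zero, zero_mul] at hb
      rw [he]
      have := le_antisymm hb (norm_nonneg _)
      simpa using norm_eq_zero.mp this
    have := sub_eq_zero.mp (by rwa [Matrix.sub_mul, Matrix.one_mul] at hzero)
    exact this.symm
  have hXQ : X * PiQ = X := by
    have hzero : X * (1 - PiQ) = 0 := by
      ext i j
      have he : (X * (1 - PiQ)) i j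
          = star (Pi.single i (1:ℂ)) ⬝ᵥ (X *ᵥ ((1 - PiQ) *ᵥ Pi.single j 1)) := by
        rw [entry_eq_dot (X * (1 - PiQ)) i j, ← mulVec_mulVec]
      have hz : msqrt Q *ᵥ ((1 - PiQ) *ᵥ Pi.single j 1) = 0 := by
        rw [mulVec_mulVec, Matrix.mul_sub, Matrix.mul_one, hsQPiQ, sub_self, zero_mulVec]
      have hb := bilinear_bound hP hQ hM (Pi.single i 1) ((1 - PiQ) *ᵥ Pi.single j 1)
      rw [hz, cnorm_zero, mul_zero] at hb
      rw [he]
      have := le_antisymm hb (norm_nonneg _)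
      simpa using norm_eq_zero.mp this
    have := sub_eq_zero.mp (by rwa [Matrix.mul_sub, Matrix.mul_one] at hzero)
    exact this.symm
  set K := SpP * X * SpQ with hKdef
  have hK : msqrt P * K * msqrt Q = X := by
    have h1 : msqrt P * K * msqrt Q = (msqrt P * SpP) * X * (SpQ * msqrt Q) := by
      rw [hKdef]; noncomm_ring
    rw [h1, hsPSpP, hSpQsQ, Matrix.mul_assoc, hXQ, hPX]
  -- K is a contraction
  have hKcon : ∀ w, cnorm (K *ᵥ w) ≤ cnorm w := by
    intro w
    have hKw : K *ᵥ w = SpP *ᵥ (X *ᵥ (SpQ *ᵥ w)) := by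
      rw [mulVec_mulVec, mulVec_mulVec, hKdef, Matrix.mul_assoc]
    have h1 : star (K *ᵥ w) ⬝ᵥ (K *ᵥ w)
        = star (SpP *ᵥ (K *ᵥ w)) ⬝ᵥ (X *ᵥ (SpQ *ᵥ w)) := by
      conv_lhs => rw [hKw, dot_shift, hSpPh, ← hKw]
    have hb := bilinear_bound hP hQ hM (SpP *ᵥ (K *ᵥ w)) (SpQ *ᵥ w)
    have e5 := mulVec_mulVec (K *ᵥ w) (msqrt P) SpP
    rw [hsPSpP] at e5
    have e6 := mulVec_mulVec w (msqrt Q) SpQ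
    rw [hsQSpQ] at e6
    rw [e5, e6] at hb
    have h2 : cnorm (K *ᵥ w) ^ 2 ≤ cnorm (PiP *ᵥ (K *ᵥ w)) * cnorm (PiQ *ᵥ w) := by
      rw [cnorm_sq, h1]
      exact (Complex.re_le_norm _).trans hb
    have h3 : cnorm (PiP *ᵥ (K *ᵥ w)) ≤ cnorm (K *ᵥ w) := cnorm_contract hPiPh hPiPid _
    have h4 : cnorm (PiQ *ᵥ w) ≤ cnorm w := cnorm_contract hPiQh hPiQid _
    by_cases hz : cnorm (K *ᵥ w) = 0
    · rw [hz]; exact cnorm_nonneg w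
    · have hpos : 0 < cnorm (K *ᵥ w) := lt_of_le_of_ne (cnorm_nonneg _) (Ne.symm hz)
      nlinarith [cnorm_nonneg (PiQ *ᵥ w), cnorm_nonneg (K *ᵥ w), cnorm_nonneg w]
  -- spectral data of N = √Q P √Q
  have hNpsd : (msqrt Q * P * msqrt Q).PosSemidef := by
    have := hP.conjTranspose_mul_mul_same (msqrt Q)
    rwa [hsQh] at this
  obtain ⟨W, ν, hW, hW', hν, hNspec, hNs⟩ := psd_spectral hNpsd
  have hfid : fidelity P Q = ∑ j, Real.sqrt (ν j) := by
    unfold fidelity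
    rw [hNs, cdiag_trace hW', Complex.ofReal_re]
  set A0 := msqrt P * msqrt Q with hA0def
  have hA0 : A0ᴴ * A0 = msqrt Q * P * msqrt Q := by
    rw [hA0def, conjTranspose_mul, hsPh, hsQh]
    calc msqrt Q * msqrt P * (msqrt P * msqrt Q)
        = msqrt Q * (msqrt P * msqrt P) * msqrt Q := by noncomm_ring
      _ = msqrt Q * P * msqrt Q := by rw [msqrt_mul_self hP]
  -- trace identity
  have htr : X.trace = ((A0 * W)ᴴ * (K * W)).trace := by
    have e1 : X.trace = (A0ᴴ * K).trace := by
      conv_lhs => rw [← hK]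
      rw [trace_mul_cycle, hA0def, conjTranspose_mul, hsPh, hsQh, Matrix.mul_assoc]
    have e2 : (A0 * W)ᴴ * (K * W) = Wᴴ * (A0ᴴ * K) * W := by
      rw [conjTranspose_mul]; noncomm_ring
    rw [e1, e2, trace_mul_cycle, ← Matrix.mul_assoc, hW, Matrix.one_mul]
  -- column norms
  have hcol_entry : ∀ (B C : Matrix m m ℂ) (j : m),
      (Bᴴ * C) j j = star (fun i => B i j) ⬝ᵥ (fun i => C i j) := by
    intro B C j
    simp [mul_apply, conjTranspose_apply, dotProduct]
  have htrace_sum : ∀ (B C : Matrix m m ℂ),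
      (Bᴴ * C).trace = ∑ j, star (fun i => B i j) ⬝ᵥ (fun i => C i j) := by
    intro B C
    rw [Matrix.trace]
    exact Finset.sum_congr rfl fun j _ => hcol_entry B C j
  have hBB : (A0 * W)ᴴ * (A0 * W) = diagonal (fun j => ((ν j : ℝ) : ℂ)) := by
    have e1 : (A0 * W)ᴴ * (A0 * W) = Wᴴ * (A0ᴴ * A0) * W := by
      rw [conjTranspose_mul]; noncomm_ring
    rw [e1, hA0, hNspec]
    unfold cdiag
    calc Wᴴ * (W * diagonal (fun i => (ν i : ℂ)) * Wᴴ) * W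
        = (Wᴴ * W) * diagonal (fun i => (ν i : ℂ)) * (Wᴴ * W) := by noncomm_ring
      _ = diagonal (fun i => (ν i : ℂ)) := by rw [hW']; simp
  have hcA : ∀ j, cnorm (fun i => (A0 * W) i j) = Real.sqrt (ν j) := by
    intro j
    have h1 : cnorm (fun i => (A0 * W) i j) ^ 2 = ν j := by
      rw [cnorm_sq, ← hcol_entry, hBB]
      simp
    rw [← Real.sqrt_sq (cnorm_nonneg (fun i => (A0 * W) i j)), h1]
  have hcK : ∀ j, cnorm (fun i => (K * W) i j) ≤ 1 := by
    intro j
    have hcolKW : (fun i => (K * W) i j) = K *ᵥ (fun k => W k j) := by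
      funext i
      simp [mul_apply, mulVec, dotProduct]
    have hcolW : cnorm (fun k => W k j) = 1 := by
      have h1 : cnorm (fun k => W k j) ^ 2 = 1 := by
        rw [cnorm_sq, ← hcol_entry, hW']
        simp
      nlinarith [cnorm_nonneg (fun k => W k j), sq_nonneg (cnorm (fun k => W k j) - 1),
        sq_nonneg (cnorm (fun k => W k j) + 1)]
    rw [hcolKW, ← hcolW]
    exact hKcon _
  -- final estimate
  rw [htr, htrace_sum, hfid]
  have h1 : (∑ j, star (fun i => (A0 * W) i j) ⬝ᵥ (fun i => (K * W) i j)).re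
      ≤ ∑ j, Real.sqrt (ν j) := by
    rw [Complex.re_sum]
    refine Finset.sum_le_sum fun j _ => ?_
    refine (Complex.re_le_norm _).trans ?_
    refine (abs_dot_le _ _).trans ?_
    rw [hcA j]
    calc Real.sqrt (ν j) * cnorm (fun i => (K * W) i j)
        ≤ Real.sqrt (ν j) * 1 := by
          exact mul_le_mul_of_nonneg_left (hcK j) (Real.sqrt_nonneg _)
      _ = Real.sqrt (ν j) := mul_one _
  exact h1

/-! ### Sums of conjugations -/

lemma posSemidef_sum {ι : Type*} [Fintype ι] (f : ι → Matrix m m ℂ)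
    (h : ∀ i, (f i).PosSemidef) : (∑ i, f i).PosSemidef := by
  classical
  induction (Finset.univ : Finset ι) using Finset.induction with
  | empty => simp [Matrix.PosSemidef.zero]
  | @insert x s hx ih =>
      rw [Finset.sum_insert hx]
      exact (h x).add ih

lemma conj_fromBlocks {a b : Type*} [Fintype a] [Fintype b]
    (F : Matrix a b ℂ) (P X X' Q : Matrix a a ℂ) :
    (fromBlocks F 0 0 F)ᴴ * fromBlocks P X X' Q * fromBlocks F 0 0 F
      = fromBlocks (Fᴴ * P * F) (Fᴴ * X * F) (Fᴴ * X' * F) (Fᴴ * Q * F) := by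
  rw [fromBlocks_conjTranspose, fromBlocks_multiply, fromBlocks_multiply]
  simp [Matrix.mul_assoc]

lemma sum_fromBlocks {ι : Type*} [Fintype ι] {a : Type*}
    (f g h l : ι → Matrix a a ℂ) :
    ∑ k, fromBlocks (f k) (g k) (h k) (l k)
      = fromBlocks (∑ k, f k) (∑ k, g k) (∑ k, h k) (∑ k, l k) := by
  ext i j
  cases i <;> cases j <;> simp [Matrix.sum_apply, fromBlocks]

/-! ### Fidelity: symmetry and monotonicity -/

lemma fid_le_symm {P Q : Matrix m m ℂ} (hP : P.PosSemidef) (hQ : Q.PosSemidef) :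
    fidelity P Q ≤ fidelity Q P := by
  obtain ⟨X, hX, htr⟩ := exists_opt hP hQ
  have hswap : (fromBlocks Q Xᴴ (Xᴴ)ᴴ P).PosSemidef := by
    set J : Matrix (m ⊕ m) (m ⊕ m) ℂ := fromBlocks 0 1 1 0 with hJ
    have h2 := hX.conjTranspose_mul_mul_same J
    have he : Jᴴ * fromBlocks P X Xᴴ Q * J = fromBlocks Q Xᴴ (Xᴴ)ᴴ P := by
      rw [hJ]
      rw [fromBlocks_conjTranspose, fromBlocks_multiply, fromBlocks_multiply]
      simp
    rwa [he] at h2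
  have hle := retr_le_fidelity hQ hP hswap
  rw [trace_conjTranspose, htr] at hle
  simpa using hle

lemma fid_symm {P Q : Matrix m m ℂ} (hP : P.PosSemidef) (hQ : Q.PosSemidef) :
    fidelity P Q = fidelity Q P :=
  le_antisymm (fid_le_symm hP hQ) (fid_le_symm hQ hP)

lemma fid_mono {P Q D : Matrix m m ℂ} (hP : P.PosSemidef) (hQ : Q.PosSemidef)
    (hD : D.PosSemidef) : fidelity P Q ≤ fidelity P (Q + D) := by
  obtain ⟨X, hX, htr⟩ := exists_opt hP hQ
  have hfeas : (fromBlocks P X Xᴴ (Q + D)).PosSemidef := by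
    have h2 := hX.add (psd_fromBlocks_right hD)
    have he : fromBlocks P X Xᴴ Q + fromBlocks 0 0 0 D = fromBlocks P X Xᴴ (Q + D) := by
      rw [fromBlocks_add]; simp
    rwa [he] at h2
  have hle := retr_le_fidelity hP (hQ.add hD) hfeas
  rw [htr, Complex.ofReal_re] at hle
  exact hle

/-! ### Product-index machinery: pinching, partial trace embeddings, block diagonals -/

section prod

variable {α β : Type*} [Fintype α] [DecidableEq α] [Fintype β] [DecidableEq β]

def pmask (β : Type*) [Fintype β] [DecidableEq β] (k : α) : Matrix (α × β) (α × β) ℂ :=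
  diagonal (fun p => if p.1 = k then 1 else 0)

lemma pmask_herm (k : α) : (pmask β k)ᴴ = pmask β k := by
  unfold pmask
  rw [diagonal_conjTranspose]
  have h : (star fun p : α × β => if p.1 = k then (1:ℂ) else 0)
      = fun p : α × β => if p.1 = k then (1:ℂ) else 0 := by
    funext p
    rw [Pi.star_apply, apply_ite (star : ℂ → ℂ), star_one, star_zero]
  rw [h]

def pinch (M : Matrix (α × β) (α × β) ℂ) : Matrix (α × β) (α × β) ℂ :=
  of fun p q => if p.1 = q.1 then M p q else 0

lemma pinch_eq_sum (M : Matrix (α × β) (α × β) ℂ) :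
    pinch M = ∑ k, (pmask β k)ᴴ * M * pmask β k := by
  ext p q
  rw [Matrix.sum_apply]
  have hterm : ∀ k, ((pmask β k)ᴴ * M * pmask β k) p q
      = (if p.1 = k then 1 else 0) * M p q * (if q.1 = k then 1 else 0) := by
    intro k
    rw [pmask_herm]
    unfold pmask
    rw [mul_diagonal, diagonal_mul]
  rw [Finset.sum_congr rfl fun k _ => hterm k]
  simp only [ite_mul, one_mul, zero_mul, mul_ite, mul_one, mul_zero, Finset.sum_ite_eq,
    Finset.mem_univ, if_true]
  unfold pinch
  rw [of_apply]

lemma pinch_psd {M : Matrix (α × β) (α × β) ℂ} (hM : M.PosSemidef) : (pinch M).PosSemidef := by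
  rw [pinch_eq_sum]
  exact posSemidef_sum _ fun k => hM.conjTranspose_mul_mul_same _

lemma pinch_trace (M : Matrix (α × β) (α × β) ℂ) : (pinch M).trace = M.trace := by
  unfold Matrix.trace
  refine Finset.sum_congr rfl fun p _ => ?_
  simp [pinch, Matrix.diag]

lemma pinch_conjTranspose (M : Matrix (α × β) (α × β) ℂ) : (pinch M)ᴴ = pinch Mᴴ := by
  ext p q
  rw [conjTranspose_apply]
  unfold pinch
  rw [of_apply, of_apply]
  by_cases h : p.1 = q.1
  · rw [if_pos h, if_pos h.symm, conjTranspose_apply]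
  · rw [if_neg (fun hh => h hh.symm), if_neg h, star_zero]

lemma pinch_ptraceX (M : Matrix (α × β) (α × β) ℂ) : ptraceX (pinch M) = ptraceX M := by
  ext y y'
  unfold ptraceX
  refine Finset.sum_congr rfl fun x _ => ?_
  simp [pinch]

/-- The big-block pinching: if `fromBlocks P X Xᴴ Q` is PSD then so is the blockwise pinching. -/
lemma pinch_fromBlocks_psd {P X Q : Matrix (α × β) (α × β) ℂ}
    (h : (fromBlocks P X Xᴴ Q).PosSemidef) :
    (fromBlocks (pinch P) (pinch X) (pinch X)ᴴ (pinch Q)).PosSemidef := by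
  have hsum := posSemidef_sum
    (fun k => (fromBlocks (pmask β k) 0 0 (pmask β k))ᴴ * fromBlocks P X Xᴴ Q
      * fromBlocks (pmask β k) 0 0 (pmask β k))
    (fun k => h.conjTranspose_mul_mul_same _)
  have he : (∑ k, (fromBlocks (pmask β k) 0 0 (pmask β k))ᴴ * fromBlocks P X Xᴴ Q
      * fromBlocks (pmask β k) 0 0 (pmask β k))
      = fromBlocks (pinch P) (pinch X) (pinch X)ᴴ (pinch Q) := by
    rw [Finset.sum_congr rfl fun k _ => conj_fromBlocks (pmask β k) P X Xᴴ Q]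
    rw [sum_fromBlocks]
    have e1 : ∀ (M : Matrix (α × β) (α × β) ℂ),
        (∑ k, (pmask β k)ᴴ * M * pmask β k) = pinch M := fun M => (pinch_eq_sum M).symm
    rw [e1 P, e1 X, e1 Xᴴ, e1 Q, pinch_conjTranspose]
  rwa [he] at hsum

/-- Embeddings realizing the partial trace as a sum of conjugations. -/
def emb (β : Type*) [Fintype β] [DecidableEq β] (k : α) : Matrix (α × β) β ℂ :=
  of fun p y => if p = (k, y) then 1 else 0

lemma mul_emb (M : Matrix (α × β) (α × β) ℂ) (k : α) (p : α × β) (y' : β) :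
    (M * emb β k) p y' = M p (k, y') := by
  rw [mul_apply]
  rw [Finset.sum_eq_single (k, y')]
  · simp [emb]
  · intro q _ hq; simp [emb, hq]
  · intro hh; exact absurd (Finset.mem_univ _) hh

lemma emb_conj_apply (M : Matrix (α × β) (α × β) ℂ) (k : α) (y y' : β) :
    ((emb β k)ᴴ * M * emb β k) y y' = M (k, y) (k, y') := by
  rw [Matrix.mul_assoc, mul_apply]
  rw [Finset.sum_eq_single (k, y)]
  · rw [mul_emb]
    simp [emb, conjTranspose_apply]
  · intro q _ hq
    simp [emb, conjTranspose_apply, hq]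
  · intro hh; exact absurd (Finset.mem_univ _) hh

lemma sum_emb_conj (M : Matrix (α × β) (α × β) ℂ) :
    (∑ k, ((emb β k)ᴴ * M : Matrix β (α × β) ℂ) * emb β k) = ptraceX M := by
  ext y y'
  rw [Matrix.sum_apply]
  unfold ptraceX
  rw [of_apply]
  exact Finset.sum_congr rfl fun k _ => emb_conj_apply M k y y'

lemma trace_prod (M : Matrix (α × β) (α × β) ℂ) :
    M.trace = ∑ k, ∑ y, M (k, y) (k, y) := by
  rw [Matrix.trace, Fintype.sum_prod_type]
  rfl

end prod

/-! ### Block diagonal matrices over the product index -/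

section bd

variable {α β : Type*} [Fintype α] [DecidableEq α] [Fintype β] [DecidableEq β]

def bd (A : α → Matrix β β ℂ) : Matrix (α × β) (α × β) ℂ :=
  of fun p q => if p.1 = q.1 then A p.1 p.2 q.2 else 0

lemma bd_apply (A : α → Matrix β β ℂ) (p q : α × β) :
    bd A p q = if p.1 = q.1 then A p.1 p.2 q.2 else 0 := rfl

lemma bd_mul (A B : α → Matrix β β ℂ) : bd A * bd B = bd fun i => A i * B i := by
  ext ⟨i, y⟩ ⟨j, y'⟩
  rw [mul_apply, Fintype.sum_prod_type]
  by_cases h : i = j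
  · subst h
    rw [Finset.sum_eq_single i]
    · simp only [bd_apply, if_pos rfl, mul_apply]
      simp
    · intro k _ hk
      refine Finset.sum_eq_zero fun z _ => ?_
      simp only [bd_apply]
      rw [if_neg (by simpa using Ne.symm hk), zero_mul]
    · intro hh; exact absurd (Finset.mem_univ _) hh
  · refine Eq.trans ?_ (by simp [bd_apply, h] : (0:ℂ) = bd (fun i => A i * B i) (i,y) (j,y'))
    refine Finset.sum_eq_zero fun k _ => Finset.sum_eq_zero fun z _ => ?_
    show (if i = k then A i y z else 0) * (if k = j then B k z y' else 0) = 0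
    by_cases h1 : i = k
    · have h2 : ¬ (k = j) := fun hh => h (h1.trans hh)
      rw [if_neg h2, mul_zero]
    · rw [if_neg h1, zero_mul]

lemma bd_herm (A : α → Matrix β β ℂ) : (bd A)ᴴ = bd fun i => (A i)ᴴ := by
  ext ⟨i, y⟩ ⟨j, y'⟩
  rw [conjTranspose_apply]
  by_cases h : i = j
  · subst h
    simp [bd_apply, conjTranspose_apply]
  · simp [bd_apply, h, Ne.symm h]

lemma bd_mulVec (A : α → Matrix β β ℂ) (x : α × β → ℂ) (p : α × β) :
    (bd A *ᵥ x) p = (A p.1 *ᵥ fun z => x (p.1, z)) p.2 := by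
  show (fun q => bd A p q) ⬝ᵥ x = _
  rw [dotProduct, Fintype.sum_prod_type, Finset.sum_eq_single p.1]
  · show ∑ z, bd A p (p.1, z) * x (p.1, z) = (fun z => A p.1 p.2 z) ⬝ᵥ (fun z => x (p.1, z))
    rw [dotProduct]
    refine Finset.sum_congr rfl fun z _ => ?_
    simp [bd_apply]
  · intro k _ hk
    refine Finset.sum_eq_zero fun z _ => ?_
    simp only [bd_apply]
    rw [if_neg (by simpa using Ne.symm hk), zero_mul]
  · intro hh; exact absurd (Finset.mem_univ _) hh

lemma bd_psd (A : α → Matrix β β ℂ) (h : ∀ i, (A i).PosSemidef) : (bd A).PosSemidef := by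
  refine Matrix.PosSemidef.of_dotProduct_mulVec_nonneg ?_ ?_
  · show (bd A)ᴴ = bd A
    rw [bd_herm]
    exact congrArg bd (funext fun i => (h i).1)
  · intro x
    have he : star x ⬝ᵥ (bd A *ᵥ x)
        = ∑ k, star (fun z => x (k, z)) ⬝ᵥ (A k *ᵥ fun z => x (k, z)) := by
      rw [dotProduct, Fintype.sum_prod_type]
      refine Finset.sum_congr rfl fun k _ => ?_
      rw [dotProduct]
      refine Finset.sum_congr rfl fun y _ => ?_
      rw [bd_mulVec]
      rfl
    rw [he]
    exact Finset.sum_nonneg fun k _ => (h k).dotProduct_mulVec_nonneg _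

lemma bd_trace (A : α → Matrix β β ℂ) : (bd A).trace = ∑ i, (A i).trace := by
  rw [trace_prod]
  refine Finset.sum_congr rfl fun k _ => ?_
  rw [Matrix.trace]
  refine Finset.sum_congr rfl fun y _ => ?_
  simp [bd_apply, Matrix.diag]

lemma msqrt_bd (A : α → Matrix β β ℂ) (h : ∀ i, (A i).PosSemidef) :
    msqrt (bd A) = bd fun i => msqrt (A i) := by
  refine msqrt_unique (bd_psd _ fun i => msqrt_posSemidef (h i)) ?_
  rw [bd_mul]
  exact congrArg bd (funext fun i => msqrt_mul_self (h i))

lemma bd_ptraceX (A : α → Matrix β β ℂ) : ptraceX (bd A) = ∑ i, A i := by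
  ext y y'
  unfold ptraceX
  rw [of_apply, Matrix.sum_apply]
  refine Finset.sum_congr rfl fun k _ => ?_
  simp [bd_apply]

lemma fidelity_bd (A B : α → Matrix β β ℂ) (hA : ∀ i, (A i).PosSemidef)
    (hB : ∀ i, (B i).PosSemidef) :
    fidelity (bd A) (bd B) = ∑ i, fidelity (A i) (B i) := by
  unfold fidelity
  have hin : ∀ i, (msqrt (B i) * A i * msqrt (B i)).PosSemidef := by
    intro i
    have := (hA i).conjTranspose_mul_mul_same (msqrt (B i))
    rwa [msqrt_herm (hB i)] at this
  rw [msqrt_bd B hB, bd_mul, bd_mul, msqrt_bd _ hin, bd_trace, Complex.re_sum]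

end bd

end BDP


open BDP in
/-- Let `𝐏 = ∑ i, |i⟩⟨i| ⊗ Pt i` be block-diagonal with PSD blocks,
`Q` PSD on `𝒴`, and `𝐐` any PSD matrix on `𝒳⊗𝒴` with `Tr_𝒳[𝐐] = Q`. Then the
block-diagonal pinching `𝐐'` of `𝐐` again satisfies `Tr_𝒳[𝐐'] = Q` and
`F(𝐏,𝐐) ≤ F(𝐏,𝐐')`; consequently the supremum of `F(𝐏,·)` over
`{𝐐 PSD : Tr_𝒳[𝐐] = Q}` is attained at a block-diagonal matrix. -/
theorem block_diagonal_projection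
    {n : ℕ} {Y : Type*} [Fintype Y] [DecidableEq Y]
    (Pt : Fin n → Matrix Y Y ℂ) (hPt : ∀ i, (Pt i).PosSemidef)
    (PP : Matrix (Fin n × Y) (Fin n × Y) ℂ)
    (hPP : ∀ p q, PP p q = if p.1 = q.1 then Pt p.1 p.2 q.2 else 0)
    (Q : Matrix Y Y ℂ) (hQ : Q.PosSemidef)
    (QQ : Matrix (Fin n × Y) (Fin n × Y) ℂ) (hQQ : QQ.PosSemidef)
    (hQQm : ptraceX QQ = Q)
    (QQ' : Matrix (Fin n × Y) (Fin n × Y) ℂ)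
    (hQQ' : ∀ p q, QQ' p q = if p.1 = q.1 then QQ p q else 0) :
    ptraceX QQ' = Q ∧ fidelity PP QQ ≤ fidelity PP QQ' ∧
    ∃ R : Matrix (Fin n × Y) (Fin n × Y) ℂ,
      R.PosSemidef ∧ ptraceX R = Q ∧ (∀ p q, p.1 ≠ q.1 → R p q = 0) ∧
      ∀ S : Matrix (Fin n × Y) (Fin n × Y) ℂ, S.PosSemidef → ptraceX S = Q →
        fidelity PP S ≤ fidelity PP R := by
  classical
  have hQQ'pinch : QQ' = pinch QQ := by
    ext p q; rw [hQQ' p q]; rfl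
  have hpart1 : ptraceX QQ' = Q := by
    rw [hQQ'pinch, pinch_ptraceX, hQQm]
  have hPPbd : PP = bd Pt := by
    ext p q; rw [hPP p q]; rfl
  have hPPpsd : PP.PosSemidef := by rw [hPPbd]; exact bd_psd _ hPt
  have hQQ'psd : QQ'.PosSemidef := by rw [hQQ'pinch]; exact pinch_psd hQQ
  have hpart2 : fidelity PP QQ ≤ fidelity PP QQ' := by
    obtain ⟨X, hX, htr⟩ := exists_opt hPPpsd hQQ
    have hbig := pinch_fromBlocks_psd hX
    have hPPpinch : pinch PP = PP := by
      ext p q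
      show (if p.1 = q.1 then PP p q else 0) = PP p q
      by_cases h : p.1 = q.1
      · rw [if_pos h]
      · rw [if_neg h, hPP p q, if_neg h]
    rw [hPPpinch, ← hQQ'pinch] at hbig
    have hle := retr_le_fidelity hPPpsd hQQ'psd hbig
    rw [pinch_trace X, htr, Complex.ofReal_re] at hle
    exact hle
  refine ⟨hpart1, hpart2, ?_⟩
  by_cases hn : n = 0
  · subst hn
    refine ⟨QQ', hQQ'psd, hpart1, fun p q _ => p.1.elim0, ?_⟩
    intro S hS hSm
    have hSR : S = QQ' := by ext p q; exact p.1.elim0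
    rw [hSR]
  -- main case
  set Pbar := ∑ i, Pt i with hPbar
  have hPbarpsd : Pbar.PosSemidef := posSemidef_sum _ hPt
  set T := msqrt Q with hT
  have hTh : Tᴴ = T := msqrt_herm hQ
  have hNpsd : (T * Pbar * T).PosSemidef := by
    have := hPbarpsd.conjTranspose_mul_mul_same T; rwa [hTh] at this
  obtain ⟨W, ν, hW, hW', hν, hNspec, hNs⟩ := psd_spectral hNpsd
  have hfidPQ : fidelity Pbar Q = ∑ j, Real.sqrt (ν j) := by
    unfold fidelity
    rw [← hT, hNs, cdiag_trace hW', Complex.ofReal_re]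
  -- the universal upper bound
  have hPPtr : ptraceX PP = Pbar := by
    ext y y'
    unfold ptraceX
    rw [of_apply, hPbar, Matrix.sum_apply]
    refine Finset.sum_congr rfl fun k _ => ?_
    rw [hPP]; simp
  have hub : ∀ S : Matrix (Fin n × Y) (Fin n × Y) ℂ, S.PosSemidef → ptraceX S = Q →
      fidelity PP S ≤ fidelity Pbar Q := by
    intro S hS hSm
    obtain ⟨X, hX, htr⟩ := exists_opt hPPpsd hS
    have hsum := posSemidef_sum (fun k => (fromBlocks (emb Y k) 0 0 (emb Y k))ᴴ
        * fromBlocks PP X Xᴴ S * fromBlocks (emb Y k) 0 0 (emb Y k))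
      (fun k => hX.conjTranspose_mul_mul_same _)
    have he : (∑ k, ((fromBlocks (emb Y k) 0 0 (emb Y k))ᴴ * fromBlocks PP X Xᴴ S :
          Matrix (Y ⊕ Y) (Fin n × Y ⊕ Fin n × Y) ℂ)
        * fromBlocks (emb Y k) 0 0 (emb Y k))
        = fromBlocks (ptraceX PP) (ptraceX X) (ptraceX Xᴴ) (ptraceX S) := by
      refine (Finset.sum_congr rfl fun k _ => conj_fromBlocks (emb Y k) PP X Xᴴ S).trans ?_
      rw [sum_fromBlocks]
      congr 1 <;> exact sum_emb_conj _
    have hXh : ptraceX Xᴴ = (ptraceX X)ᴴ := by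
      ext y y'
      unfold ptraceX
      rw [of_apply, conjTranspose_apply, of_apply, star_sum]
      exact Finset.sum_congr rfl fun k _ => by rw [conjTranspose_apply]
    replace hsum := (congrArg Matrix.PosSemidef he).mp hsum
    rw [hPPtr, hSm, hXh] at hsum
    have hle := retr_le_fidelity hPbarpsd hQ hsum
    have htr2 : (ptraceX X).trace = X.trace := by
      rw [trace_prod X, Matrix.trace]
      rw [Finset.sum_comm]
      rfl
    rw [htr2, htr, Complex.ofReal_re] at hle
    exact hle
  -- the optimal block-diagonal matrix
  set Spinv := cdiag W (fun j => (Real.sqrt (ν j))⁻¹) with hSpinv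
  have hSpinvh : Spinvᴴ = Spinv := cdiag_herm _
  have hSpinvpsd : Spinv.PosSemidef :=
    cdiag_psd _ fun j => inv_nonneg.mpr (Real.sqrt_nonneg _)
  set G := T * Spinv * T with hG
  have hGh : Gᴴ = G := by
    rw [hG, conjTranspose_mul, conjTranspose_mul, hTh, hSpinvh]
    noncomm_ring
  set Qb : Fin n → Matrix Y Y ℂ := fun i => G * Pt i * G with hQb
  have hQbpsd : ∀ i, (Qb i).PosSemidef := by
    intro i
    have := (hPt i).conjTranspose_mul_mul_same G
    rwa [hGh] at this
  set g : Y → ℝ := fun j => (Real.sqrt (ν j))⁻¹ * ν j * (Real.sqrt (ν j))⁻¹ with hg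
  have hQbsum : G * Pbar * G = T * cdiag W g * T := by
    have e2 : G * Pbar * G = T * (Spinv * (T * Pbar * T) * Spinv) * T := by
      rw [hG]; noncomm_ring
    rw [e2, hNspec, hSpinv, cdiag_mul hW', cdiag_mul hW']
  have hQbsum' : ∑ i, Qb i = T * cdiag W g * T := by
    rw [← hQbsum, hPbar, Finset.mul_sum, Finset.sum_mul]
  set Rem := Q - T * cdiag W g * T with hRem
  have hRempsd : Rem.PosSemidef := by
    have hQTT : Q = T * cdiag W (fun _ => 1) * T := by
      rw [cdiag_one hW, Matrix.mul_one, hT, msqrt_mul_self hQ]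
    have : Rem = T * cdiag W (fun j => 1 - g j) * T := by
      rw [hRem, hQTT, ← Matrix.sub_mul, ← Matrix.mul_sub, cdiag_sub]
    rw [this]
    have hpsd : (cdiag W (fun j => 1 - g j)).PosSemidef :=
      cdiag_psd _ fun j => sqrt_mul_inv_ind (hν j)
    have := hpsd.conjTranspose_mul_mul_same T
    rwa [hTh] at this
  have hi0 : 0 < n := Nat.pos_of_ne_zero hn
  set i0 : Fin n := ⟨0, hi0⟩ with hi0def
  set Qt : Fin n → Matrix Y Y ℂ := fun i => Qb i + if i = i0 then Rem else 0 with hQt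
  have hQtpsd : ∀ i, (Qt i).PosSemidef := by
    intro i
    refine (hQbpsd i).add ?_
    by_cases h : i = i0
    · rw [if_pos h]; exact hRempsd
    · rw [if_neg h]; exact Matrix.PosSemidef.zero
  have hQtsum : ∑ i, Qt i = Q := by
    rw [hQt, Finset.sum_add_distrib, hQbsum']
    rw [Finset.sum_ite_eq' Finset.univ i0 (fun _ => Rem)]
    simp only [Finset.mem_univ, if_true]
    rw [hRem]
    abel
  refine ⟨bd Qt, bd_psd _ hQtpsd, by rw [bd_ptraceX, hQtsum], ?_, ?_⟩
  · intro p q h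
    rw [bd_apply, if_neg h]
  intro S hS hSm
  refine (hub S hS hSm).trans ?_
  -- fidelity Pbar Q ≤ fidelity PP (bd Qt)
  have hval : ∑ i, fidelity (Pt i) (Qb i) = fidelity Pbar Q := by
    have hGi : ∀ i, (msqrt (Pt i) * G * msqrt (Pt i)) * (msqrt (Pt i) * G * msqrt (Pt i))
        = msqrt (Pt i) * Qb i * msqrt (Pt i) := by
      intro i
      have hself : msqrt (Pt i) * msqrt (Pt i) = Pt i := msqrt_mul_self (hPt i)
      calc (msqrt (Pt i) * G * msqrt (Pt i)) * (msqrt (Pt i) * G * msqrt (Pt i))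
          = msqrt (Pt i) * G * (msqrt (Pt i) * msqrt (Pt i)) * G * msqrt (Pt i) := by
            noncomm_ring
        _ = msqrt (Pt i) * (G * Pt i * G) * msqrt (Pt i) := by rw [hself]; noncomm_ring
        _ = msqrt (Pt i) * Qb i * msqrt (Pt i) := by rw [hQb]
    have hGipsd : ∀ i, (msqrt (Pt i) * G * msqrt (Pt i)).PosSemidef := by
      intro i
      have hsPh : (msqrt (Pt i))ᴴ = msqrt (Pt i) := msqrt_herm (hPt i)
      have hsh : (msqrt Spinv)ᴴ = msqrt Spinv := msqrt_herm hSpinvpsd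
      have hss : msqrt Spinv * msqrt Spinv = Spinv := msqrt_mul_self hSpinvpsd
      have he : (msqrt Spinv * T * msqrt (Pt i))ᴴ * (msqrt Spinv * T * msqrt (Pt i))
          = msqrt (Pt i) * G * msqrt (Pt i) := by
        rw [conjTranspose_mul, conjTranspose_mul, hsPh, hTh, hsh, hG,
          show T * Spinv * T = T * (msqrt Spinv * msqrt Spinv) * T by rw [hss]]
        noncomm_ring
      rw [← he]
      exact posSemidef_conjTranspose_mul_self _
    have hfidi : ∀ i, fidelity (Pt i) (Qb i)
        = ((msqrt (Pt i) * G * msqrt (Pt i)).trace).re := by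
      intro i
      rw [fid_symm (hPt i) (hQbpsd i)]
      unfold fidelity
      rw [msqrt_unique (hGipsd i) (hGi i)]
    have htraceGi : ∀ i, (msqrt (Pt i) * G * msqrt (Pt i)).trace = (Pt i * G).trace := by
      intro i
      rw [trace_mul_cycle, msqrt_mul_self (hPt i)]
    have hsumtrace : ∑ i, (Pt i * G).trace = ((∑ j, Real.sqrt (ν j) : ℝ) : ℂ) := by
      have e1 : (Pbar * G).trace = ∑ i, (Pt i * G).trace := by
        rw [hPbar, Finset.sum_mul, trace_sum]
      rw [← e1]
      have e2 : Pbar * G = Pbar * T * Spinv * T := by rw [hG]; noncomm_ring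
      rw [e2, trace_mul_cycle]
      have e3 : T * (Pbar * T) * Spinv = (T * Pbar * T) * Spinv := by noncomm_ring
      rw [e3, hNspec, hSpinv, cdiag_mul hW', cdiag_trace hW']
      congr 1
      refine Finset.sum_congr rfl fun j _ => ?_
      rw [mul_comm]
      exact sqrt_inv_mul_self (hν j)
    calc ∑ i, fidelity (Pt i) (Qb i)
        = ∑ i, ((msqrt (Pt i) * G * msqrt (Pt i)).trace).re :=
          Finset.sum_congr rfl fun i _ => hfidi i
      _ = ∑ i, ((Pt i * G).trace).re :=
          Finset.sum_congr rfl fun i _ => by rw [htraceGi i]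
      _ = (∑ i, (Pt i * G).trace).re := by rw [Complex.re_sum]
      _ = fidelity Pbar Q := by rw [hsumtrace, Complex.ofReal_re, hfidPQ]
  have hmono : fidelity Pbar Q ≤ ∑ i, fidelity (Pt i) (Qt i) := by
    rw [← hval]
    refine Finset.sum_le_sum fun i _ => ?_
    by_cases h : i = i0
    · have he : Qt i = Qb i + Rem := by simp [hQt, h]
      rw [he]
      exact fid_mono (hPt i) (hQbpsd i) hRempsd
    · have he : Qt i = Qb i := by simp [hQt, h]
      rw [he]
  have hfinal : fidelity PP (bd Qt) = ∑ i, fidelity (Pt i) (Qt i) := by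
    rw [hPPbd, fidelity_bd _ _ hPt hQtpsd]
  rw [hfinal]
  exact hmono
end
end

section
/- Let Θ and Ξ be completely positive maps from matrices over 𝒳 to matrices over 𝒴 (i.e., their Choi matrices 𝔠(Θ), 𝔠(Ξ) are PSD), let r ≥ max{rank(𝔠(Θ)), rank(𝔠(Ξ))}, set 𝒵 = ℂ^r, and let K, L ∈ M_{𝒳, 𝒴⊗𝒵} be Stinespring operators of Θ and Ξ respectively, i.e., Tr_𝒵[K X K†] = Θ(X) and Tr_𝒵[L X L†] = Ξ(X) for all X. Then B(𝔠(Θ), 𝔠(Ξ)) = min over unitaries U on 𝒵 of ‖K − (I_𝒴 ⊗ U) L‖_F², where ‖·‖_F is the Frobenius norm. In other words, the Choi–Bures distance between two CP maps equals their Stinespring–Frobenius distance. -/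
open Matrix Kronecker
open scoped ComplexOrder

noncomputable section

/-- The Choi matrix of a map `Φ` from matrices over `𝒳` to matrices over `𝒴`:
`𝔠(Φ) = ∑ i j, |i⟩⟨j| ⊗ Φ(|i⟩⟨j|)`. -/
noncomputable def choi {X Y : Type*} [DecidableEq X]
    (Φ : Matrix X X ℂ → Matrix Y Y ℂ) : Matrix (X × Y) (X × Y) ℂ :=
  Matrix.of fun p q => Φ (Matrix.single p.1 q.1 1) p.2 q.2

/-- Partial trace over the auxiliary second factor `𝒵`. -/
noncomputable def ptraceAux {Y Z : Type*} [Fintype Z]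
    (M : Matrix (Y × Z) (Y × Z) ℂ) : Matrix Y Y ℂ :=
  Matrix.of fun y y' => ∑ z : Z, M (y, z) (y', z)

/-- The squared Bures distance `B(P,Q) = Tr P + Tr Q − 2 F(P,Q)`. -/
noncomputable def buresSq {n : Type*} [Fintype n] [DecidableEq n]
    (P Q : Matrix n n ℂ) : ℝ :=
  P.trace.re + Q.trace.re - 2 * fidelity P Q

open scoped InnerProductSpace
open scoped MatrixOrder

section Aux

variable {n m : Type*} [Fintype n] [DecidableEq n] [Fintype m] [DecidableEq m]

lemma msqrt_of_psd {A : Matrix n n ℂ} (h : A.PosSemidef) : msqrt A = CFC.sqrt A := by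
  rw [msqrt, dif_pos h, CFC.sqrt_eq_cfc, cfc_nnreal_eq_real _ A h.nonneg, h.1.cfc_eq]
  simp only [IsHermitian.cfc, Unitary.conjStarAlgAut_apply]
  congr 2
  congr 1
  funext i
  simp [max_eq_left (h.eigenvalues_nonneg i)]

lemma msqrt_psd {A : Matrix n n ℂ} (h : A.PosSemidef) : (msqrt A).PosSemidef := by
  rw [msqrt_of_psd h]; exact Matrix.nonneg_iff_posSemidef.mp (CFC.sqrt_nonneg A)

lemma msqrt_mul_self {A : Matrix n n ℂ} (h : A.PosSemidef) : msqrt A * msqrt A = A := by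
  rw [msqrt_of_psd h]; exact CFC.sqrt_mul_sqrt_self A h.nonneg

lemma msqrt_herm {A : Matrix n n ℂ} (h : A.PosSemidef) : (msqrt A)ᴴ = msqrt A :=
  (msqrt_psd h).isHermitian

lemma msqrt_unique {A B : Matrix n n ℂ} (hA : A.PosSemidef) (hB : B.PosSemidef)
    (h : B * B = A) : msqrt A = B := by
  rw [msqrt_of_psd hA]
  exact CFC.sqrt_unique h hB.nonneg

lemma msqrt_zero : msqrt (0 : Matrix n n ℂ) = 0 :=
  msqrt_unique Matrix.PosSemidef.zero Matrix.PosSemidef.zero (by simp)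

lemma msqrt_mul_msqrt_mul {A : Matrix n n ℂ} (hA : A.PosSemidef) (B : Matrix n m ℂ) :
    msqrt A * (msqrt A * B) = A * B := by
  rw [← Matrix.mul_assoc, msqrt_mul_self hA]

-- helper for dot products
lemma star_mulVec_dot (A B : Matrix m n ℂ) (v w : n → ℂ) :
    star (A *ᵥ v) ⬝ᵥ (B *ᵥ w) = star v ⬝ᵥ ((Aᴴ * B) *ᵥ w) := by
  rw [Matrix.star_mulVec, ← Matrix.dotProduct_mulVec, Matrix.mulVec_mulVec]

lemma toEuclideanLin_mul' {p : Type*} [Fintype p] [DecidableEq p]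
    (A : Matrix m n ℂ) (B : Matrix n p ℂ) :
    Matrix.toEuclideanLin (A * B) =
      (Matrix.toEuclideanLin A) ∘ₗ (Matrix.toEuclideanLin B) := by
  apply LinearMap.ext; intro v
  simp [Matrix.toEuclideanLin_apply, Matrix.mulVec_mulVec]

lemma toEuclideanLin_one : Matrix.toEuclideanLin (1 : Matrix n n ℂ) = LinearMap.id := by
  apply LinearMap.ext; intro v
  simp [Matrix.toEuclideanLin_apply]

lemma exists_polar (M : Matrix n n ℂ) :
    ∃ W : Matrix n n ℂ, Wᴴ * W = 1 ∧ W * msqrt (Mᴴ * M) = M := by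
  have hP : (Mᴴ * M).PosSemidef := Matrix.posSemidef_conjTranspose_mul_self M
  set S := msqrt (Mᴴ * M) with hSdef
  have hS : S.PosSemidef := msqrt_psd hP
  have hSS : S * S = Mᴴ * M := msqrt_mul_self hP
  have hSH : Sᴴ = S := hS.isHermitian
  set s := Matrix.toEuclideanLin S with hs
  set mm := Matrix.toEuclideanLin M with hmm
  have hinner : ∀ v : EuclideanSpace ℂ n, ⟪mm v, mm v⟫_ℂ = ⟪s v, s v⟫_ℂ := by
    intro v
    rw [hs, hmm]
    simp only [EuclideanSpace.inner_eq_star_dotProduct, Matrix.toEuclideanLin_apply,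
      Equiv.apply_symm_apply]
    rw [dotProduct_comm, dotProduct_comm (S *ᵥ _), star_mulVec_dot, star_mulVec_dot, hSH, hSS]
  have hnorm : ∀ v : EuclideanSpace ℂ n, ‖mm v‖ = ‖s v‖ := by
    intro v
    have h3 : ‖mm v‖ ^ 2 = ‖s v‖ ^ 2 := by
      rw [← @inner_self_eq_norm_sq ℂ, ← @inner_self_eq_norm_sq ℂ, hinner v]
    calc ‖mm v‖ = Real.sqrt (‖mm v‖ ^ 2) := (Real.sqrt_sq (norm_nonneg _)).symm
    _ = Real.sqrt (‖s v‖ ^ 2) := by rw [h3]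
    _ = ‖s v‖ := Real.sqrt_sq (norm_nonneg _)
  have hker : LinearMap.ker s ≤ LinearMap.ker mm := by
    intro v hv
    rw [LinearMap.mem_ker] at hv ⊢
    rw [← norm_eq_zero, hnorm, hv, norm_zero]
  set f0 : (EuclideanSpace ℂ n ⧸ LinearMap.ker s) →ₗ[ℂ] EuclideanSpace ℂ n :=
    (LinearMap.ker s).liftQ mm hker with hf0
  set f : (LinearMap.range s) →ₗ[ℂ] EuclideanSpace ℂ n :=
    f0 ∘ₗ (s.quotKerEquivRange.symm : (LinearMap.range s) →ₗ[ℂ] _) with hf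
  have hfapp : ∀ v : EuclideanSpace ℂ n,
      f ⟨s v, LinearMap.mem_range_self s v⟩ = mm v := by
    intro v
    have h1 : s.quotKerEquivRange.symm ⟨s v, LinearMap.mem_range_self s v⟩ =
        (LinearMap.ker s).mkQ v := s.quotKerEquivRange_symm_apply_image v (LinearMap.mem_range_self s v)
    simp only [hf, LinearMap.coe_comp, Function.comp_apply, LinearEquiv.coe_coe, h1, hf0]
    rw [Submodule.mkQ_apply, Submodule.liftQ_apply]
  set fi : (LinearMap.range s) →ₗᵢ[ℂ] EuclideanSpace ℂ n :=
    { toLinearMap := f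
      norm_map' := by
        rintro ⟨v, hv⟩
        obtain ⟨x, rfl⟩ := hv
        rw [hfapp x]
        rw [hnorm]
        rfl } with hfi
  set g := fi.extend with hg
  set W : Matrix n n ℂ := Matrix.toEuclideanLin.symm g.toLinearMap with hW
  have hWt : Matrix.toEuclideanLin W = g.toLinearMap := by
    rw [hW]; exact Matrix.toEuclideanLin.apply_symm_apply _
  have hgs : ∀ v : EuclideanSpace ℂ n, g (s v) = mm v := by
    intro v
    have := LinearIsometry.extend_apply fi ⟨s v, LinearMap.mem_range_self s v⟩
    rw [← hg] at this
    rw [show ((⟨s v, LinearMap.mem_range_self s v⟩ : LinearMap.range s) : EuclideanSpace ℂ n)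
      = s v from rfl] at this
    rw [this]
    exact hfapp v
  refine ⟨W, ?_, ?_⟩
  · apply Matrix.toEuclideanLin.injective
    rw [toEuclideanLin_mul', Matrix.toEuclideanLin_conjTranspose_eq_adjoint, hWt,
      toEuclideanLin_one]
    apply LinearMap.ext; intro v
    apply ext_inner_left ℂ
    intro u
    rw [LinearMap.comp_apply, LinearMap.adjoint_inner_right]
    exact g.inner_map_map u v
  · apply Matrix.toEuclideanLin.injective
    rw [toEuclideanLin_mul', hWt]
    apply LinearMap.ext; intro v
    rw [LinearMap.comp_apply]
    exact hgs v

lemma msqrt_conj_unitary {A W : Matrix n n ℂ} (hA : A.PosSemidef) (hW : Wᴴ * W = 1) :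
    msqrt (W * A * Wᴴ) = W * msqrt A * Wᴴ := by
  refine msqrt_unique (hA.mul_mul_conjTranspose_same W)
    ((msqrt_psd hA).mul_mul_conjTranspose_same W) ?_
  simp only [Matrix.mul_assoc]
  rw [show Wᴴ * (W * (msqrt A * Wᴴ)) = msqrt A * Wᴴ by
    rw [← Matrix.mul_assoc, hW, Matrix.one_mul]]
  rw [msqrt_mul_msqrt_mul hA]

lemma trace_msqrt_swap_sq (M : Matrix n n ℂ) :
    (msqrt (Mᴴ * M)).trace = (msqrt (M * Mᴴ)).trace := by
  obtain ⟨W, hW, hWS⟩ := exists_polar M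
  have hP : (Mᴴ * M).PosSemidef := Matrix.posSemidef_conjTranspose_mul_self M
  have h1 : M * Mᴴ = W * (Mᴴ * M) * Wᴴ := by
    conv_lhs => rw [← hWS]
    rw [Matrix.conjTranspose_mul, msqrt_herm hP]
    simp only [Matrix.mul_assoc]
    rw [msqrt_mul_msqrt_mul hP]
    simp only [Matrix.mul_assoc]
  rw [h1, msqrt_conj_unitary hP hW, Matrix.trace_mul_cycle, hW, Matrix.one_mul]

lemma posSemidef_fromBlocks_diag {A : Matrix m m ℂ} {B : Matrix n n ℂ}
    (hA : A.PosSemidef) (hB : B.PosSemidef) :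
    (Matrix.fromBlocks A 0 0 B).PosSemidef := by
  refine Matrix.PosSemidef.of_dotProduct_mulVec_nonneg ?_ ?_
  · have : (Matrix.fromBlocks A 0 0 B)ᴴ = Matrix.fromBlocks Aᴴ 0 0 Bᴴ := by
      rw [Matrix.fromBlocks_conjTranspose]; simp
    rw [Matrix.IsHermitian, this, hA.isHermitian.eq, hB.isHermitian.eq]
  · intro x
    have hx : x = Sum.elim (x ∘ Sum.inl) (x ∘ Sum.inr) := (Sum.elim_comp_inl_inr x).symm
    rw [hx]
    rw [Matrix.fromBlocks_mulVec]
    simp only [Matrix.zero_mulVec, add_zero, zero_add]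
    rw [Function.star_sumElim, sumElim_dotProduct_sumElim]
    exact add_nonneg (hA.dotProduct_mulVec_nonneg _) (hB.dotProduct_mulVec_nonneg _)

lemma msqrt_fromBlocks_diag {A : Matrix m m ℂ} {B : Matrix n n ℂ}
    (hA : A.PosSemidef) (hB : B.PosSemidef) :
    msqrt (Matrix.fromBlocks A 0 0 B) = Matrix.fromBlocks (msqrt A) 0 0 (msqrt B) := by
  refine msqrt_unique (posSemidef_fromBlocks_diag hA hB)
    (posSemidef_fromBlocks_diag (msqrt_psd hA) (msqrt_psd hB)) ?_
  rw [Matrix.fromBlocks_multiply]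
  simp [msqrt_mul_self hA, msqrt_mul_self hB]

lemma trace_fromBlocks' (A : Matrix m m ℂ) (B : Matrix m n ℂ) (C : Matrix n m ℂ)
    (D : Matrix n n ℂ) :
    (Matrix.fromBlocks A B C D).trace = A.trace + D.trace := by
  unfold Matrix.trace Matrix.diag
  rw [Fintype.sum_sum_type]
  simp

lemma trace_msqrt_swap (X : Matrix m n ℂ) :
    (msqrt (Xᴴ * X)).trace = (msqrt (X * Xᴴ)).trace := by
  set M : Matrix (m ⊕ n) (m ⊕ n) ℂ := Matrix.fromBlocks 0 X 0 0 with hM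
  have hMH : Mᴴ = Matrix.fromBlocks 0 0 Xᴴ 0 := by
    rw [hM, Matrix.fromBlocks_conjTranspose]; simp
  have h1 : Mᴴ * M = Matrix.fromBlocks 0 0 0 (Xᴴ * X) := by
    rw [hMH, hM, Matrix.fromBlocks_multiply]; simp
  have h2 : M * Mᴴ = Matrix.fromBlocks (X * Xᴴ) 0 0 0 := by
    rw [hMH, hM, Matrix.fromBlocks_multiply]; simp
  have := trace_msqrt_swap_sq M
  rw [h1, h2, msqrt_fromBlocks_diag Matrix.PosSemidef.zero
      (Matrix.posSemidef_conjTranspose_mul_self X),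
    msqrt_fromBlocks_diag (Matrix.posSemidef_self_mul_conjTranspose X)
      Matrix.PosSemidef.zero, trace_fromBlocks', trace_fromBlocks'] at this
  simpa [msqrt_zero] using this

lemma trace_psd_mul_unitary_re_le {S U : Matrix n n ℂ} (hS : S.PosSemidef)
    (hU : Uᴴ * U = 1) : ((S * U).trace).re ≤ S.trace.re := by
  set R := msqrt S with hR
  have hRR : R * R = S := msqrt_mul_self hS
  have hRH : Rᴴ = R := msqrt_herm hS
  have hRij : ∀ i j : n, star (R j i) = R i j := by
    intro i j
    have := congrFun (congrFun hRH i) j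
    simpa [Matrix.conjTranspose_apply] using this
  have h1 : (S * U).trace = (R * U * R).trace := by
    rw [← hRR, Matrix.mul_assoc, Matrix.trace_mul_comm, Matrix.mul_assoc]
  have entry : ∀ i : n, ((R * U * R) i i).re ≤ (S i i).re := by
    intro i
    set c : n → ℂ := fun j => R j i with hc
    have e1 : (R * U * R) i i = star c ⬝ᵥ (U *ᵥ c) := by
      calc (R * U * R) i i = ∑ k, (∑ j, R i j * U j k) * R k i := by
            simp [Matrix.mul_apply]
        _ = ∑ k, ∑ j, R i j * U j k * R k i := by
            simp [Finset.sum_mul]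
        _ = ∑ j, ∑ k, star (R j i) * (U j k * R k i) := by
            rw [Finset.sum_comm]
            apply Finset.sum_congr rfl; intro j _
            apply Finset.sum_congr rfl; intro k _
            rw [hRij]; ring
        _ = star c ⬝ᵥ (U *ᵥ c) := by
            simp [dotProduct, Matrix.mulVec, Finset.mul_sum, hc]
    have e2 : S i i = star c ⬝ᵥ c := by
      rw [← hRR, Matrix.mul_apply]
      apply Finset.sum_congr rfl; intro j _
      rw [← hRij]
      rfl
    set v : EuclideanSpace ℂ n := (WithLp.equiv 2 _).symm c with hv
    set w : EuclideanSpace ℂ n := (WithLp.equiv 2 _).symm (U *ᵥ c) with hw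
    have hvw : ⟪v, w⟫_ℂ = star c ⬝ᵥ (U *ᵥ c) := (EuclideanSpace.inner_toLp_toLp _ _).trans (dotProduct_comm _ _)
    have hvv : ⟪v, v⟫_ℂ = star c ⬝ᵥ c := (EuclideanSpace.inner_toLp_toLp _ _).trans (dotProduct_comm _ _)
    have hww : ⟪w, w⟫_ℂ = star c ⬝ᵥ c := by
      rw [hw]
      refine (EuclideanSpace.inner_toLp_toLp _ _).trans ((dotProduct_comm _ _).trans ?_)
      rw [star_mulVec_dot, hU, Matrix.one_mulVec]
    have hnw : ‖w‖ = ‖v‖ := by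
      have h3 : ‖w‖ ^ 2 = ‖v‖ ^ 2 := by
        rw [← @inner_self_eq_norm_sq ℂ, ← @inner_self_eq_norm_sq ℂ, hww, hvv]
      calc ‖w‖ = Real.sqrt (‖w‖ ^ 2) := (Real.sqrt_sq (norm_nonneg _)).symm
        _ = Real.sqrt (‖v‖ ^ 2) := by rw [h3]
        _ = ‖v‖ := Real.sqrt_sq (norm_nonneg _)
    calc ((R * U * R) i i).re = (⟪v, w⟫_ℂ).re := by rw [hvw, e1]
      _ ≤ ‖(⟪v, w⟫_ℂ)‖ := Complex.re_le_norm _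
      _ ≤ ‖v‖ * ‖w‖ := norm_inner_le_norm v w
      _ = ‖v‖ * ‖v‖ := by rw [hnw]
      _ = (⟪v, v⟫_ℂ).re := (@inner_self_eq_norm_mul_norm ℂ _ _ _ _ v).symm
      _ = (S i i).re := by rw [hvv, ← e2]
  rw [h1]
  unfold Matrix.trace Matrix.diag
  rw [Complex.re_sum, Complex.re_sum]
  exact Finset.sum_le_sum fun i _ => entry i

lemma fidelity_eq_trace_msqrt {H Z : Type*} [Fintype H] [DecidableEq H]
    [Fintype Z] [DecidableEq Z] (A B : Matrix H Z ℂ) :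
    fidelity (A * Aᴴ) (B * Bᴴ) = ((msqrt ((Aᴴ * B)ᴴ * (Aᴴ * B))).trace).re := by
  have hP : (A * Aᴴ).PosSemidef := Matrix.posSemidef_self_mul_conjTranspose A
  have hQ : (B * Bᴴ).PosSemidef := Matrix.posSemidef_self_mul_conjTranspose B
  set Y : Matrix H H ℂ := msqrt (A * Aᴴ) * msqrt (B * Bᴴ) with hY
  have step1 : msqrt (B * Bᴴ) * (A * Aᴴ) * msqrt (B * Bᴴ) = Yᴴ * Y := by
    rw [hY, Matrix.conjTranspose_mul, msqrt_herm hP, msqrt_herm hQ]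
    simp only [Matrix.mul_assoc]
    rw [msqrt_mul_msqrt_mul hP]
    simp only [Matrix.mul_assoc]
  have step2 : Y * Yᴴ = (msqrt (A * Aᴴ) * B) * (msqrt (A * Aᴴ) * B)ᴴ := by
    rw [hY, Matrix.conjTranspose_mul, msqrt_herm hP, msqrt_herm hQ,
      Matrix.conjTranspose_mul, msqrt_herm hP]
    simp only [Matrix.mul_assoc]
    rw [msqrt_mul_msqrt_mul hQ]
    simp only [Matrix.mul_assoc]
  have step3 : (msqrt (A * Aᴴ) * B)ᴴ * (msqrt (A * Aᴴ) * B) = (Aᴴ * B)ᴴ * (Aᴴ * B) := by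
    rw [Matrix.conjTranspose_mul, msqrt_herm hP, Matrix.conjTranspose_mul,
      Matrix.conjTranspose_conjTranspose]
    simp only [Matrix.mul_assoc]
    rw [msqrt_mul_msqrt_mul hP]
    simp only [Matrix.mul_assoc]
  unfold fidelity
  rw [step1, trace_msqrt_swap Y, step2, ← trace_msqrt_swap (msqrt (A * Aᴴ) * B), step3]

lemma mul_std_mul_conjTranspose {X' Z' : Type*} [Fintype X'] [DecidableEq X'] [Fintype Z']
    (K K' : Matrix Z' X' ℂ) (x x' : X') (p q : Z') :
    (K * Matrix.single x x' (1 : ℂ) * K'ᴴ) p q = K p x * star (K' q x') := by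
  have h1 : ∀ b, (K * Matrix.single x x' (1 : ℂ)) p b
      = if x' = b then K p x else 0 := by
    intro b
    rw [Matrix.mul_apply]
    simp only [Matrix.single, Matrix.of_apply, mul_ite, mul_one, mul_zero]
    by_cases hb : x' = b
    · subst hb
      simp
    · simp [hb]
  rw [Matrix.mul_apply]
  simp only [h1, Matrix.conjTranspose_apply, ite_mul, zero_mul]
  simp

section Main

open Kronecker

variable {X Y : Type*} [Fintype X] [DecidableEq X] [Fintype Y] [DecidableEq Y] {r : ℕ}

-- the reindexed Stinespring operator
private noncomputable def reIdx (K : Matrix (Y × Fin r) X ℂ) : Matrix (X × Y) (Fin r) ℂ :=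
  Matrix.of fun p z => K (p.2, z) p.1

lemma reIdx_mul_conjTranspose_eq_choi
    (Θ : Matrix X X ℂ →ₗ[ℂ] Matrix Y Y ℂ) (K : Matrix (Y × Fin r) X ℂ)
    (hK : ∀ M : Matrix X X ℂ, ptraceAux (K * M * Kᴴ) = Θ M) :
    reIdx K * (reIdx K)ᴴ = choi (fun M => Θ M) := by
  ext p q
  obtain ⟨x, y⟩ := p; obtain ⟨x', y'⟩ := q
  have h2 : choi (fun M => Θ M) (x, y) (x', y')
      = ∑ z : Fin r, (K * Matrix.single x x' (1 : ℂ) * Kᴴ) (y, z) (y', z) := by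
    show (Θ (Matrix.single x x' 1)) y y' = _
    rw [← hK]
    rfl
  rw [h2, Matrix.mul_apply]
  apply Finset.sum_congr rfl
  intro z _
  rw [mul_std_mul_conjTranspose]
  rfl

lemma trace_reIdx (K : Matrix (Y × Fin r) X ℂ) :
    (reIdx K * (reIdx K)ᴴ).trace = (Kᴴ * K).trace := by
  rw [Matrix.trace_mul_comm]
  unfold Matrix.trace Matrix.diag reIdx
  simp only [Matrix.mul_apply, Matrix.conjTranspose_apply, Matrix.of_apply]
  rw [Finset.sum_comm, Fintype.sum_prod_type]
  apply Finset.sum_congr rfl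
  intro x _
  rw [Fintype.sum_prod_type]

lemma sum_swap4 {M : Type*} [AddCommMonoid M] {α β γ δ : Type*}
    [Fintype α] [Fintype β] [Fintype γ] [Fintype δ] (g : α → β → γ → δ → M) :
    ∑ z : γ, ∑ z' : δ, ∑ x : α, ∑ y : β, g x y z z'
      = ∑ x : α, ∑ y : β, ∑ z : γ, ∑ z' : δ, g x y z z' :=
  calc ∑ z : γ, ∑ z' : δ, ∑ x : α, ∑ y : β, g x y z z'
      = ∑ z : γ, ∑ x : α, ∑ z' : δ, ∑ y : β, g x y z z' :=
        Finset.sum_congr rfl fun z _ => Finset.sum_comm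
    _ = ∑ z : γ, ∑ x : α, ∑ y : β, ∑ z' : δ, g x y z z' :=
        Finset.sum_congr rfl fun z _ => Finset.sum_congr rfl fun x _ =>
          Finset.sum_comm
    _ = ∑ x : α, ∑ z : γ, ∑ y : β, ∑ z' : δ, g x y z z' := Finset.sum_comm
    _ = ∑ x : α, ∑ y : β, ∑ z : γ, ∑ z' : δ, g x y z z' :=
        Finset.sum_congr rfl fun x _ => Finset.sum_comm

lemma cross_term (K L : Matrix (Y × Fin r) X ℂ) (U : Matrix (Fin r) (Fin r) ℂ) :
    (Kᴴ * (((1 : Matrix Y Y ℂ) ⊗ₖ U) * L)).trace = ((reIdx K)ᴴ * reIdx L * Uᵀ).trace := by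
  have e1 : ∀ x : X, (Kᴴ * (((1 : Matrix Y Y ℂ) ⊗ₖ U) * L)) x x
      = ∑ y : Y, ∑ z : Fin r, ∑ z' : Fin r,
          star (K (y, z) x) * U z z' * L (y, z') x := by
    intro x
    rw [Matrix.mul_apply, Fintype.sum_prod_type]
    apply Finset.sum_congr rfl; intro y _
    apply Finset.sum_congr rfl; intro z _
    rw [Matrix.conjTranspose_apply, Matrix.mul_apply, Fintype.sum_prod_type]
    have e2 : ∀ y' : Y, ∑ z' : Fin r,
        ((1 : Matrix Y Y ℂ) ⊗ₖ U) (y, z) (y', z') * L (y', z') x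
        = if y = y' then ∑ z' : Fin r, U z z' * L (y', z') x else 0 := by
      intro y'
      by_cases h : y = y'
      · subst h
        simp [Matrix.kroneckerMap_apply, Matrix.one_apply]
      · simp [Matrix.kroneckerMap_apply, Matrix.one_apply, h]
    rw [Finset.sum_congr rfl fun y' _ => e2 y']
    rw [Finset.sum_ite_eq Finset.univ y
      (fun y' => ∑ z' : Fin r, U z z' * L (y', z') x)]
    simp only [Finset.mem_univ, if_true]
    rw [Finset.mul_sum]
    apply Finset.sum_congr rfl; intro z' _
    ring
  have e3 : ((reIdx K)ᴴ * reIdx L * Uᵀ).trace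
      = ∑ z : Fin r, ∑ z' : Fin r, ∑ x : X, ∑ y : Y,
          star (K (y, z) x) * U z z' * L (y, z') x := by
    unfold Matrix.trace Matrix.diag
    apply Finset.sum_congr rfl; intro z _
    rw [Matrix.mul_apply]
    apply Finset.sum_congr rfl; intro z' _
    rw [Matrix.mul_apply]
    rw [Finset.sum_mul, Fintype.sum_prod_type]
    apply Finset.sum_congr rfl; intro x _
    apply Finset.sum_congr rfl; intro y _
    rw [Matrix.conjTranspose_apply]
    show star (reIdx K (x, y) z) * reIdx L (x, y) z' * Uᵀ z' z = _
    unfold reIdx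
    simp only [Matrix.of_apply, Matrix.transpose_apply]
    ring
  rw [e3, sum_swap4]
  unfold Matrix.trace Matrix.diag
  rw [Finset.sum_congr rfl fun x _ => e1 x]

lemma frob_sum (D : Matrix (Y × Fin r) X ℂ) :
    ∑ p : Y × Fin r, ∑ x : X, Complex.normSq (D p x) = ((Dᴴ * D).trace).re := by
  unfold Matrix.trace Matrix.diag
  rw [Complex.re_sum, Finset.sum_comm]
  apply Finset.sum_congr rfl
  intro p _
  rw [Matrix.mul_apply, Complex.re_sum]
  apply Finset.sum_congr rfl
  intro x _
  rw [Matrix.conjTranspose_apply, Complex.normSq_apply, Complex.mul_re]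
  simp [Complex.conj_re, Complex.conj_im]

end Main

open Kronecker in
lemma conjTranspose_transpose'0 : True := trivial

lemma conjTranspose_transpose' (A : Matrix n m ℂ) : (Aᵀ)ᴴ = (Aᴴ)ᵀ := by
  ext i j
  simp [Matrix.conjTranspose_apply, Matrix.transpose_apply]


end Aux

/-- For CP maps `Θ, Ξ` (PSD Choi matrices) with Stinespring operators
`K, L : 𝒳 → 𝒴 ⊗ 𝒵`, `𝒵 = ℂ^r`, `r` at least the ranks of the Choi matrices, the Bures
distance between the Choi matrices equals the minimal squared Frobenius distance
`‖K − (I ⊗ U) L‖_F²` over unitaries `U` on `𝒵`: the Choi–Bures distance coincides with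
the Stinespring–Frobenius distance. -/
theorem choi_bures_eq_stinespring_frobenius
    {X Y : Type*} [Fintype X] [DecidableEq X] [Fintype Y] [DecidableEq Y] {r : ℕ}
    (Θ Ξ : Matrix X X ℂ →ₗ[ℂ] Matrix Y Y ℂ)
    (hΘ : (choi fun M => Θ M).PosSemidef) (hΞ : (choi fun M => Ξ M).PosSemidef)
    (hrΘ : (choi fun M => Θ M).rank ≤ r) (hrΞ : (choi fun M => Ξ M).rank ≤ r)
    (K L : Matrix (Y × Fin r) X ℂ)
    (hK : ∀ M : Matrix X X ℂ, ptraceAux (K * M * Kᴴ) = Θ M)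
    (hL : ∀ M : Matrix X X ℂ, ptraceAux (L * M * Lᴴ) = Ξ M) :
    IsLeast
      {t : ℝ | ∃ U : Matrix (Fin r) (Fin r) ℂ, Uᴴ * U = 1 ∧
        t = ∑ p : Y × Fin r, ∑ x : X,
          Complex.normSq ((K - ((1 : Matrix Y Y ℂ) ⊗ₖ U) * L) p x)}
      (buresSq (choi fun M => Θ M) (choi fun M => Ξ M)) := by

  have hPA : reIdx K * (reIdx K)ᴴ = choi (fun M => Θ M) :=
    reIdx_mul_conjTranspose_eq_choi Θ K hK
  have hQB : reIdx L * (reIdx L)ᴴ = choi (fun M => Ξ M) :=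
    reIdx_mul_conjTranspose_eq_choi Ξ L hL
  set M : Matrix (Fin r) (Fin r) ℂ := (reIdx K)ᴴ * reIdx L with hMdef
  have hMM : (Mᴴ * M).PosSemidef := Matrix.posSemidef_conjTranspose_mul_self M
  have hfid : fidelity (choi fun M => Θ M) (choi fun M => Ξ M)
      = ((msqrt (Mᴴ * M)).trace).re := by
    rw [← hPA, ← hQB, fidelity_eq_trace_msqrt]
  have hval : ∀ U : Matrix (Fin r) (Fin r) ℂ, Uᴴ * U = 1 →
      (∑ p : Y × Fin r, ∑ x : X,
        Complex.normSq ((K - ((1 : Matrix Y Y ℂ) ⊗ₖ U) * L) p x))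
      = (choi fun M => Θ M).trace.re + (choi fun M => Ξ M).trace.re
        - 2 * ((M * Uᵀ).trace).re := by
    intro U hU
    rw [frob_sum]
    set C := (1 : Matrix Y Y ℂ) ⊗ₖ U with hCdef
    have hC : Cᴴ * C = 1 := by
      have h1 : Cᴴ = (1 : Matrix Y Y ℂ) ⊗ₖ Uᴴ := by
        ext p q
        simp only [hCdef, Matrix.conjTranspose_apply, Matrix.kroneckerMap_apply,
          Matrix.one_apply, apply_ite, star_mul', star_one, star_zero, ite_mul, one_mul,
          zero_mul, mul_ite, mul_one, mul_zero]
        by_cases h : p.1 = q.1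
        · simp [h]
        · simp [h, Ne.symm h]
      rw [h1, hCdef, ← Matrix.mul_kronecker_mul, Matrix.one_mul, hU, Matrix.one_kronecker_one]
    have h2 : (C * L)ᴴ * (C * L) = Lᴴ * L := by
      rw [Matrix.conjTranspose_mul, Matrix.mul_assoc, ← Matrix.mul_assoc Cᴴ C L, hC,
        Matrix.one_mul]
    have hexp : (K - C * L)ᴴ * (K - C * L)
        = Kᴴ * K - Kᴴ * (C * L) - ((C * L)ᴴ * K - Lᴴ * L) := by
      rw [Matrix.conjTranspose_sub, Matrix.sub_mul, Matrix.mul_sub, Matrix.mul_sub, h2]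
    rw [hexp, Matrix.trace_sub, Matrix.trace_sub, Matrix.trace_sub]
    have h3 : ((C * L)ᴴ * K).trace = star ((Kᴴ * (C * L)).trace) := by
      conv_rhs => rw [← Matrix.trace_conjTranspose, Matrix.conjTranspose_mul,
        Matrix.conjTranspose_conjTranspose]
    have h4 : (Kᴴ * K).trace = (choi fun M => Θ M).trace := by
      rw [← trace_reIdx K, hPA]
    have h5 : (Lᴴ * L).trace = (choi fun M => Ξ M).trace := by
      rw [← trace_reIdx L, hQB]
    have h6 : (Kᴴ * (C * L)).trace = (M * Uᵀ).trace := by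
      rw [hCdef, cross_term K L U, hMdef]
    rw [h3, h4, h5, h6]
    simp only [Complex.sub_re, Complex.star_def, Complex.conj_re]
    ring
  obtain ⟨W, hW, hWS⟩ := exists_polar M
  constructor
  · refine ⟨(Wᴴ)ᵀ, ?_, ?_⟩
    · rw [conjTranspose_transpose', Matrix.conjTranspose_conjTranspose,
        ← Matrix.transpose_mul, hW, Matrix.transpose_one]
    · rw [hval _ (by
        rw [conjTranspose_transpose', Matrix.conjTranspose_conjTranspose,
          ← Matrix.transpose_mul, hW, Matrix.transpose_one])]
      unfold buresSq
      rw [hfid]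
      have h7 : (M * ((Wᴴ)ᵀ)ᵀ).trace = (msqrt (Mᴴ * M)).trace := by
        rw [Matrix.transpose_transpose]
        conv_lhs => rw [← hWS]
        rw [Matrix.trace_mul_cycle, hW, Matrix.one_mul]
      rw [h7]
  · rintro t ⟨U, hU, rfl⟩
    rw [hval U hU]
    unfold buresSq
    rw [hfid]
    have hbound : ((M * Uᵀ).trace).re ≤ ((msqrt (Mᴴ * M)).trace).re := by
      have hV : (Uᵀ * W)ᴴ * (Uᵀ * W) = 1 := by
        rw [Matrix.conjTranspose_mul, conjTranspose_transpose', Matrix.mul_assoc,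
          ← Matrix.mul_assoc ((Uᴴ)ᵀ) (Uᵀ) W, ← Matrix.transpose_mul,
          mul_eq_one_comm.mp hU, Matrix.transpose_one, Matrix.one_mul, hW]
      have htr : (M * Uᵀ).trace = (msqrt (Mᴴ * M) * (Uᵀ * W)).trace := by
        conv_lhs => rw [← hWS]
        rw [Matrix.mul_assoc, Matrix.trace_mul_comm, Matrix.mul_assoc]
      rw [htr]
      exact trace_psd_mul_unitary_re_le (msqrt_psd hMM) hV
    linarith
end
end
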